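/- For every Young diagram λ inside the k×(n−k) rectangle, X_λ·𝟏 − w_λ·𝟏 ∈ Σ_{ε∈E} O(v)·ε; that is, every coefficient of X_λ·𝟏 − w_λ·𝟏 in the basis E is a rational function in v that is regular at v = 0 and vanishes at v = 0. -/

import Mathlib

open scoped Classical

set_option maxHeartbeats 1000000
set_option synthInstance.maxHeartbeats 1000000

noncomputable section

/-- The field ℚ(v) of rational functions. -/
abbrev F : Type := RatFunc ℚ

/-- The variable v. -/
def v : F := RatFunc.X

/-- The quantum integer [r] = (v^r - v^{-r})/(v - v^{-1}). -/
def qint (r : ℕ) : F := (v ^ r - v⁻¹ ^ r) / (v - v⁻¹)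

/-- Sequences of n signs (`true` = `+`) with exactly k pluses. -/
abbrev Stt (n k : ℕ) := {ε : Fin n → Bool // (Finset.univ.filter fun t => ε t = true).card = k}

/-- The adjacent transposition s_m ∈ S_n (1-based: swaps positions m and m+1). -/
def sperm (n m : ℕ) : Equiv.Perm (Fin n) :=
  if h : 1 ≤ m ∧ m < n then Equiv.swap ⟨m - 1, by omega⟩ ⟨m, h.2⟩ else 1

/-- Action of w ∈ S_n on sequences: (w·ε)_{w(t)} = ε_t. -/
def actE {n : ℕ} (w : Equiv.Perm (Fin n)) (ε : Fin n → Bool) : Fin n → Bool :=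
  fun u => ε (w⁻¹ u)

lemma card_actE {n k : ℕ} (w : Equiv.Perm (Fin n)) (ε : Fin n → Bool)
    (h : (Finset.univ.filter fun t => ε t = true).card = k) :
    (Finset.univ.filter fun t => actE w ε t = true).card = k := by
  rw [← h]
  apply Finset.card_bij (fun t _ => w⁻¹ t)
  · intro a ha
    simp only [Finset.mem_filter, Finset.mem_univ, true_and, actE] at ha ⊢
    first | exact (Finset.mem_filter.mp ha).2 | exact ha.out | exact (Set.mem_setOf_eq ▸ ha)
  · intro a _ b _ hab
    exact (Equiv.injective _) hab
  · intro b hb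
    simp only [Finset.mem_filter, Finset.mem_univ, true_and, actE] at hb ⊢
    exact ⟨w b, by first | exact Finset.mem_filter.mpr ⟨Finset.mem_univ _, by simpa using hb⟩ | exact Set.mem_setOf_eq ▸ (by simpa using hb), by simp⟩

/-- Action of S_n on the set E of sequences with k pluses. -/
def actS {n k : ℕ} (w : Equiv.Perm (Fin n)) (ε : Stt n k) : Stt n k :=
  ⟨actE w ε.1, card_actE w ε.1 ε.2⟩

/-- The module M, free over ℚ(v) with basis E. -/
abbrev M (n k : ℕ) := Stt n k → F

/-- The basis vector of M corresponding to ε ∈ E. -/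
def bv {n k : ℕ} (ε : Stt n k) : M n k := Pi.single ε 1

/-- The sequence 𝟏 = (+,…,+,−,…,−) (k pluses then n−k minuses). -/
def oneSeq (n k : ℕ) : Fin n → Bool := fun t => decide ((t : ℕ) < k)

lemma card_oneSeq (n k : ℕ) (h : k ≤ n) :
    (Finset.univ.filter fun t => oneSeq n k t = true).card = k := by
  have : (Finset.univ.filter fun t => oneSeq n k t = true)
      = Finset.univ.map (Fin.castLEEmb h) := by
    ext t
    simp only [Finset.mem_filter, Finset.mem_univ, true_and, oneSeq, decide_eq_true_eq,
      Finset.mem_map]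
    constructor
    · intro ht; exact ⟨⟨t, ht⟩, rfl⟩
    · rintro ⟨s, rfl⟩; exact s.2
  rw [this, Finset.card_map, Finset.card_univ, Fintype.card_fin]

/-- 𝟏 as an element of E. -/
def oneS (n k : ℕ) (h : k ≤ n) : Stt n k := ⟨oneSeq n k, card_oneSeq n k h⟩

/-- The operator T_m on M (1 ≤ m ≤ n−1), defined on basis elements. -/
def Thk (n k : ℕ) (m : ℕ) : M n k →ₗ[F] M n k :=
  (Pi.basisFun F (Stt n k)).constr ℕ fun ε =>
    if h : 1 ≤ m ∧ m < n then
      let a := ε.1 ⟨m - 1, by omega⟩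
      let b := ε.1 ⟨m, h.2⟩
      if a = true ∧ b = false then bv (actS (sperm n m) ε)
      else if a = b then (-v⁻¹) • bv ε
      else bv (actS (sperm n m) ε) + (v - v⁻¹) • bv ε
    else 0

/-- A Young diagram inside the k×(n−k) rectangle, given by its row lengths
(1-based: row i has lam i boxes). -/
def IsYoung (n k : ℕ) (lam : ℕ → ℕ) : Prop :=
  (∀ i, 1 ≤ i → lam (i + 1) ≤ lam i) ∧ lam 1 ≤ n - k ∧ (∀ i, k < i → lam i = 0)

/-- The boxes of λ, listed row by row from the bottom row to the top row,
each row from its last box to its first (so box (1,1) comes last). -/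
def boxList (k : ℕ) (lam : ℕ → ℕ) : List (ℕ × ℕ) :=
  ((List.range k).reverse.map fun i' =>
    (List.range (lam (i' + 1))).reverse.map fun j' => (i' + 1, j' + 1)).flatten

/-- The word of w_λ: letter k+j−i for box (i,j). -/
def wword (k : ℕ) (lam : ℕ → ℕ) : List ℕ := (boxList k lam).map fun b => k + b.2 - b.1

/-- The permutation w_λ = ∏_{(i,j)∈λ} s_{k+j−i} (box (1,1) rightmost). -/
def wperm (n k : ℕ) (lam : ℕ → ℕ) : Equiv.Perm (Fin n) := ((wword k lam).map (sperm n)).prod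

/-- w_λ·𝟏 as an element of E. -/
def wSt (n k : ℕ) (h : k ≤ n) (lam : ℕ → ℕ) : Stt n k := actS (wperm n k lam) (oneS n k h)

/-- r is the system of shifts of λ: r_{ij} = max(r_{i,j+1}, r_{i+1,j}) + 1 on boxes of λ,
and r_{ij} = 0 off λ. -/
def IsShifts (lam : ℕ → ℕ) (r : ℕ → ℕ → ℕ) : Prop :=
  ∀ i j, r i j = if 1 ≤ i ∧ 1 ≤ j ∧ j ≤ lam i then max (r i (j + 1)) (r (i + 1) j) + 1 else 0

/-- The operator X_λ = ∏_{(i,j)∈λ} (T_{k+j−i} − v^{r_{ij}}/[r_{ij}]), the factor of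
box (1,1) applied first. -/
def Xop (n k : ℕ) (lam : ℕ → ℕ) (r : ℕ → ℕ → ℕ) : Module.End F (M n k) :=
  ((boxList k lam).map fun b =>
    (Thk n k (k + b.2 - b.1) - (v ^ r b.1 b.2 / qint (r b.1 b.2)) • (1 : Module.End F (M n k)) : Module.End F (M n k))).prod

/-- O(v^m): rational functions with a zero of order ≥ m at v = 0. -/
def Ozero (m : ℕ) : Set F :=
  {f | ∃ p q : Polynomial ℚ, Polynomial.eval 0 q ≠ 0 ∧
        f = v ^ m * (algebraMap (Polynomial ℚ) F p / algebraMap (Polynomial ℚ) F q)}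

/-- Value of a sequence at the 1-based position t. -/
def posVal {n : ℕ} (ε : Fin n → Bool) (t : ℕ) : Bool :=
  if h : 1 ≤ t ∧ t ≤ n then ε ⟨t - 1, by omega⟩ else false

/-- a(i) = k + λ_i − i + 1 for 1 ≤ i ≤ k, and a(i) = 0 for i > k. -/
def aF (k : ℕ) (lam : ℕ → ℕ) (i : ℕ) : ℕ := if i ≤ k then k + lam i + 1 - i else 0

/-- The contribution r_t(ε) to the weight. -/
def weightT (k : ℕ) (lam : ℕ → ℕ) (r : ℕ → ℕ → ℕ) {n : ℕ} (ε : Fin n → Bool) (t : ℕ) : ℕ :=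
  ∑ i ∈ Finset.Icc 1 k,
    ((if posVal ε t = false ∧ 1 ≤ lam i ∧ t = aF k lam i then r i (lam i) - 1 else 0) +
     (if posVal ε t = true ∧ aF k lam (i + 1) < t ∧ t < aF k lam i then r i (t + i - k) else 0))

/-- The weight r_λ(ε) = Σ_{t=1}^n r_t(ε). -/
def weight (n k : ℕ) (lam : ℕ → ℕ) (r : ℕ → ℕ → ℕ) (ε : Fin n → Bool) : ℕ :=
  ∑ t ∈ Finset.Icc 1 n, weightT k lam r ε t

/-- 𝓛_λ = Σ_ε O(v^{r_λ(ε)}) ε. -/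
def Lset (n k : ℕ) (lam : ℕ → ℕ) (r : ℕ → ℕ → ℕ) : Set (M n k) :=
  {m | ∀ ε : Stt n k, m ε ∈ Ozero (weight n k lam r ε.1)}

/-- The length (number of inversions) of a permutation. -/
def len {n : ℕ} (w : Equiv.Perm (Fin n)) : ℕ :=
  (Finset.univ.filter fun p : Fin n × Fin n => p.1 < p.2 ∧ w p.2 < w p.1).card

/-- The parabolic subgroup W_J = S_k × S_{n−k}: permutations mapping {1,…,k} to itself. -/
def WJ (n k : ℕ) : Set (Equiv.Perm (Fin n)) :=
  {σ | ∀ t : Fin n, (t : ℕ) < k → ((σ t : ℕ) < k)}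

/-- W^J: permutations of minimal length in their coset w·W_J. -/
def Wmin (n k : ℕ) : Set (Equiv.Perm (Fin n)) :=
  {w | ∀ σ ∈ WJ n k, len w ≤ len (w * σ)}

/-- The variable x_p (1-based position p) in ℚ(v)[x_1,…,x_n]. -/
def xv (n p : ℕ) : MvPolynomial (Fin n) F :=
  if h : 1 ≤ p ∧ p ≤ n then MvPolynomial.X ⟨p - 1, by omega⟩ else 0

/-- Exchange of the variables x_i and x_{i+1} (1-based, 1 ≤ i ≤ n−1). -/
def swapf (n i : ℕ) (f : MvPolynomial (Fin n) F) : MvPolynomial (Fin n) F :=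
  if h : 1 ≤ i ∧ i < n then
    MvPolynomial.rename (Equiv.swap ⟨i - 1, by omega⟩ ⟨i, h.2⟩) f
  else f

/-- The divided difference ∂_i f = (f − s_i f)/(x_i − x_{i+1}). -/
def ddiff (n i : ℕ) (f : MvPolynomial (Fin n) F) : MvPolynomial (Fin n) F :=
  if h : ∃ g, f - swapf n i f = (xv n i - xv n (i + 1)) * g then h.choose else 0

/-- The operator ∇_i f = (v x_{i+1} − v⁻¹ x_i)·∂_i f. -/
def nabla (n i : ℕ) (f : MvPolynomial (Fin n) F) : MvPolynomial (Fin n) F :=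
  (MvPolynomial.C v * xv n (i + 1) - MvPolynomial.C v⁻¹ * xv n i) * ddiff n i f

/-- Parenthesis matching: minuses (`false`) are openers, pluses (`true`) are closers;
each plus is matched with the most recent unmatched minus, i.e. each minus with the first
subsequent unmatched plus.  Returns the list of matched pairs (p,q) of 1-based positions
and the list of unmatched minus positions. -/
def matchAux : List Bool → ℕ → List ℕ → List (ℕ × ℕ) × List ℕ
  | [], _, stack => ([], stack)
  | b :: rest, pos, stack =>
    if b then
      match stack with
      | [] => matchAux rest (pos + 1) []
      | p :: stack' =>
        let res := matchAux rest (pos + 1) stack'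
        ((p, pos) :: res.1, res.2)
    else matchAux rest (pos + 1) (pos :: stack)

/-- d(ε) = #{(p,q) : p < q, ε_p = −, ε_q = +}. -/
def dstat {n : ℕ} (ε : Fin n → Bool) : ℕ :=
  (Finset.univ.filter fun pq : Fin n × Fin n =>
    pq.1 < pq.2 ∧ ε pq.1 = false ∧ ε pq.2 = true).card

/-- The polynomial Q_ε. -/
def Qpoly (n : ℕ) (ε : Fin n → Bool) : MvPolynomial (Fin n) F :=
  MvPolynomial.C (v⁻¹ ^ dstat ε) *
    ((matchAux (List.ofFn ε) 1 []).1.map fun pq =>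
        xv n pq.1 - MvPolynomial.C (v ^ (pq.2 + 1 - pq.1)) * xv n pq.2).prod *
    ((matchAux (List.ofFn ε) 1 []).2.map fun p => xv n p).prod

/-- The operator T_m on M′ (the parabolic module induced from T_j ↦ v). -/
def Thk' (n k : ℕ) (m : ℕ) : M n k →ₗ[F] M n k :=
  (Pi.basisFun F (Stt n k)).constr ℕ fun ε =>
    if h : 1 ≤ m ∧ m < n then
      let a := ε.1 ⟨m - 1, by omega⟩
      let b := ε.1 ⟨m, h.2⟩
      if a = true ∧ b = false then bv (actS (sperm n m) ε)
      else if a = b then v • bv ε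
      else bv (actS (sperm n m) ε) + (v - v⁻¹) • bv ε
    else 0

/-- The map Φ : M′ → ℚ(v)[x_1,…,x_n], ε ↦ v^{−d(ε)} ∏_{t : ε_t = −} x_t. -/
def Phi (n k : ℕ) : M n k →ₗ[F] MvPolynomial (Fin n) F :=
  (Pi.basisFun F (Stt n k)).constr ℕ fun ε =>
    MvPolynomial.C (v⁻¹ ^ dstat ε.1) *
      ∏ t ∈ Finset.univ.filter (fun t => ε.1 t = false), MvPolynomial.X t

/-- The space P(k,n): polynomials homogeneous of total degree n−k, of degree ≤ 1 in each
variable. -/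
def Pspace (n k : ℕ) : Set (MvPolynomial (Fin n) F) :=
  {f | f.IsHomogeneous (n - k) ∧ ∀ t : Fin n, f.degreeOf t ≤ 1}


lemma v_eq : v = algebraMap (Polynomial ℚ) F Polynomial.X := rfl

lemma v_ne_zero : v ≠ 0 := by
  rw [v_eq]; exact RatFunc.algebraMap_ne_zero Polynomial.X_ne_zero

lemma algF_ne_zero {p : Polynomial ℚ} (hp : p ≠ 0) : algebraMap (Polynomial ℚ) F p ≠ 0 :=
  RatFunc.algebraMap_ne_zero hp

lemma v_pow_ne_one {d : ℕ} (hd : 1 ≤ d) : v ^ d ≠ 1 := by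
  rw [v_eq, ← map_pow, ← map_one (algebraMap (Polynomial ℚ) F)]
  intro h
  have h2 := IsFractionRing.injective (Polynomial ℚ) F h
  have h3 := congrArg (Polynomial.eval 0) h2
  rw [Polynomial.eval_pow, Polynomial.eval_X, Polynomial.eval_one,
    zero_pow (by omega : d ≠ 0)] at h3
  exact zero_ne_one h3

lemma vvsub_ne_zero : v - v⁻¹ ≠ 0 := by
  intro h
  rw [sub_eq_zero] at h
  have h2 : v ^ 2 = 1 := by
    rw [sq]; nth_rewrite 2 [h]; exact mul_inv_cancel₀ v_ne_zero
  exact v_pow_ne_one one_le_two h2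

lemma qint_num_ne_zero {r : ℕ} (hr : 1 ≤ r) : v ^ r - v⁻¹ ^ r ≠ 0 := by
  intro h
  rw [sub_eq_zero, inv_pow] at h
  have h2 : v ^ (2 * r) = 1 := by
    rw [two_mul, pow_add]; nth_rewrite 2 [h]; exact mul_inv_cancel₀ (pow_ne_zero _ v_ne_zero)
  exact v_pow_ne_one (by omega) h2

lemma qint_ne_zero {r : ℕ} (hr : 1 ≤ r) : qint r ≠ 0 :=
  div_ne_zero (qint_num_ne_zero hr) vvsub_ne_zero

lemma zero_mem_Ozero (m : ℕ) : (0 : F) ∈ Ozero m :=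
  ⟨0, 1, by simp, by simp⟩

lemma Ozero_mono {m m' : ℕ} (h : m' ≤ m) : Ozero m ⊆ Ozero m' := by
  rintro f ⟨p, q, hq, rfl⟩
  refine ⟨Polynomial.X ^ (m - m') * p, q, hq, ?_⟩
  have hm : m' + (m - m') = m := by omega
  rw [map_mul, map_pow, ← v_eq, mul_div_assoc, ← mul_assoc, ← pow_add, hm]

lemma add_mem_Ozero {m : ℕ} {f g : F} (hf : f ∈ Ozero m) (hg : g ∈ Ozero m) :
    f + g ∈ Ozero m := by
  obtain ⟨p1, q1, hq1, rfl⟩ := hf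
  obtain ⟨p2, q2, hq2, rfl⟩ := hg
  refine ⟨p1 * q2 + p2 * q1, q1 * q2, by simp [hq1, hq2], ?_⟩
  have h1 : q1 ≠ 0 := fun h => hq1 (by simp [h])
  have h2 : q2 ≠ 0 := fun h => hq2 (by simp [h])
  rw [← mul_add]
  congr 1
  rw [div_add_div _ _ (algF_ne_zero h1) (algF_ne_zero h2), map_add, map_mul, map_mul, map_mul]
  ring_nf

lemma neg_mem_Ozero {m : ℕ} {f : F} (hf : f ∈ Ozero m) : -f ∈ Ozero m := by
  obtain ⟨p, q, hq, rfl⟩ := hf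
  exact ⟨-p, q, hq, by rw [map_neg]; ring⟩

lemma mul_mem_Ozero {a b : ℕ} {f g : F} (hf : f ∈ Ozero a) (hg : g ∈ Ozero b) :
    f * g ∈ Ozero (a + b) := by
  obtain ⟨p1, q1, hq1, rfl⟩ := hf
  obtain ⟨p2, q2, hq2, rfl⟩ := hg
  have h1 : q1 ≠ 0 := fun h => hq1 (by simp [h])
  have h2 : q2 ≠ 0 := fun h => hq2 (by simp [h])
  refine ⟨p1 * p2, q1 * q2, by simp [hq1, hq2], ?_⟩
  rw [map_mul, map_mul, pow_add]
  field_simp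

lemma one_mem_Ozero : (1 : F) ∈ Ozero 0 := ⟨1, 1, by simp, by simp⟩

lemma v_mem_Ozero : v ∈ Ozero 1 := ⟨1, 1, by simp, by simp⟩

lemma smul_v_mem_Ozero {m : ℕ} {f : F} (hf : f ∈ Ozero m) : v * f ∈ Ozero m :=
  Ozero_mono (Nat.le_add_left m 1) (mul_mem_Ozero v_mem_Ozero hf)

lemma inv_v_mul_mem_Ozero {m : ℕ} {f : F} (hf : f ∈ Ozero (m + 1)) : v⁻¹ * f ∈ Ozero m := by
  obtain ⟨p, q, hq, rfl⟩ := hf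
  refine ⟨p, q, hq, ?_⟩
  rw [← mul_assoc, pow_succ', ← mul_assoc, inv_mul_cancel₀ v_ne_zero, one_mul]

lemma vsub_mul_mem_Ozero {m : ℕ} {f : F} (hf : f ∈ Ozero (m + 1)) :
    (v - v⁻¹) * f ∈ Ozero m := by
  have h1 : v * f ∈ Ozero m := smul_v_mem_Ozero (Ozero_mono (by omega) hf)
  have h2 := inv_v_mul_mem_Ozero hf
  have h3 := add_mem_Ozero h1 (neg_mem_Ozero h2)
  rw [← sub_eq_add_neg] at h3
  rwa [sub_mul]

lemma qint_coef_mem_Ozero {r : ℕ} (hr : 1 ≤ r) : v ^ r / qint r ∈ Ozero (2 * r - 1) := by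
  obtain ⟨s, rfl⟩ : ∃ s, r = s + 1 := ⟨r - 1, by omega⟩
  refine ⟨Polynomial.X ^ 2 - 1, Polynomial.X ^ (2 * (s + 1)) - 1, by simp, ?_⟩
  have hden : (v : F) ^ (2 * (s + 1)) - 1 ≠ 0 := sub_ne_zero.mpr (v_pow_ne_one (by omega))
  have hnum := qint_num_ne_zero hr
  rw [map_sub, map_sub, map_pow, map_pow, map_one, ← v_eq]
  unfold qint
  rw [div_div_eq_mul_div]
  rw [div_eq_iff (qint_num_ne_zero hr)]
  have h1 : 2 * (s + 1) - 1 = 2 * s + 1 := by omega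
  rw [h1, inv_pow]
  field_simp [v_ne_zero]
  ring
-- Combinatorial layer, part 1: basics
section Comb

variable {n k : ℕ}

/-- Row lengths of the partial shape: rows `< i` from `lam`, row `i` has `j` boxes. -/
def muP (lam : ℕ → ℕ) (i j : ℕ) : ℕ → ℕ := fun a => if a < i then lam a else if a = i then j else 0

/-- 1-based position of the plus of row `a`. -/
def Aof (k : ℕ) (mu : ℕ → ℕ) (a : ℕ) : ℕ := if a ≤ k then k + mu a + 1 - a else 0

/-- The sequence with pluses at the positions `Aof k mu a`. -/
def etaSeq (n k : ℕ) (mu : ℕ → ℕ) : Fin n → Bool :=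
  fun u => decide (∃ a, 1 ≤ a ∧ a ≤ k ∧ (u : ℕ) + 1 = Aof k mu a)

/-- Number of pluses at positions `≥ t`. -/
def Npl (n : ℕ) (ε : Fin n → Bool) (t : ℕ) : ℕ :=
  ∑ s ∈ Finset.Icc t n, (if posVal ε s = true then 1 else 0)

/-- Support condition: dominated by the shape `mu`. -/
def Supp (n k : ℕ) (mu : ℕ → ℕ) (ε : Fin n → Bool) : Prop :=
  ∀ t, Npl n ε t ≤ Npl n (etaSeq n k mu) t

/-- Row `a` contribution to the weight. -/
def rowW (n k : ℕ) (r : ℕ → ℕ → ℕ) (mu : ℕ → ℕ) (ε : Fin n → Bool) (a : ℕ) : ℕ :=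
  (if posVal ε (Aof k mu a) = false ∧ 1 ≤ mu a then r a (mu a) - 1 else 0) +
  ∑ t ∈ Finset.Ioo (Aof k mu (a+1)) (Aof k mu a), (if posVal ε t = true then r a (t + a - k) else 0)

/-- The weight of `ε` for partial shape `mu` (ambient shifts `r`). -/
def Wt (n k : ℕ) (r : ℕ → ℕ → ℕ) (mu : ℕ → ℕ) (ε : Fin n → Bool) : ℕ :=
  ∑ a ∈ Finset.Icc 1 k, rowW n k r mu ε a

/-- Weight bumped to be at least 1. -/
def Wm (n k : ℕ) (r : ℕ → ℕ → ℕ) (mu : ℕ → ℕ) (ε : Fin n → Bool) : ℕ :=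
  max (Wt n k r mu ε) 1

lemma posVal_pos (ε : Fin n → Bool) {t : ℕ} (h1 : 1 ≤ t) (h2 : t ≤ n) :
    posVal ε t = ε ⟨t - 1, by omega⟩ := dif_pos ⟨h1, h2⟩

lemma posVal_neg (ε : Fin n → Bool) {t : ℕ} (h : ¬(1 ≤ t ∧ t ≤ n)) :
    posVal ε t = false := dif_neg h

lemma posVal_ext {ε ε' : Fin n → Bool}
    (h : ∀ t, 1 ≤ t → t ≤ n → posVal ε t = posVal ε' t) : ε = ε' := by
  funext u
  have h2 := h (u + 1) (by omega) (by omega)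
  rw [posVal_pos ε (by omega) (by omega), posVal_pos ε' (by omega) (by omega)] at h2
  simpa using h2

section Young
variable {lam : ℕ → ℕ} (hY : IsYoung n k lam) (hk : 0 < k) (hkn : k < n)

include hY in
lemma lam_anti : ∀ a b, 1 ≤ a → a ≤ b → lam b ≤ lam a := by
  intro a b ha hab
  induction b with
  | zero => omega
  | succ b ih =>
    rcases Nat.lt_or_ge a (b+1) with h | h
    · exact le_trans (hY.1 b (by omega)) (ih (by omega))
    · have h2 : a = b + 1 := by omega
      rw [h2]

include hY in
lemma lam_le_nk : ∀ a, 1 ≤ a → lam a ≤ n - k := fun a ha =>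
  le_trans (lam_anti hY 1 a le_rfl ha) hY.2.1

end Young

section ShiftFacts
variable {lam : ℕ → ℕ} {r : ℕ → ℕ → ℕ} (hr : IsShifts lam r)

include hr in
lemma r_pos {a b : ℕ} (ha : 1 ≤ a) (hb1 : 1 ≤ b) (hb2 : b ≤ lam a) : 1 ≤ r a b := by
  rw [hr a b, if_pos ⟨ha, hb1, hb2⟩]; omega

include hr in
lemma r_row {a b : ℕ} (ha : 1 ≤ a) (hb1 : 1 ≤ b) (hb2 : b ≤ lam a) :
    r a (b + 1) + 1 ≤ r a b := by
  rw [hr a b, if_pos ⟨ha, hb1, hb2⟩]; omega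

include hr in
lemma r_col {a b : ℕ} (ha : 1 ≤ a) (hb1 : 1 ≤ b) (hb2 : b ≤ lam a) :
    r (a + 1) b + 1 ≤ r a b := by
  rw [hr a b, if_pos ⟨ha, hb1, hb2⟩]; omega

include hr in
lemma r_row_mono {a : ℕ} (ha : 1 ≤ a) : ∀ {c b : ℕ}, 1 ≤ c → c ≤ b → b ≤ lam a →
    r a b ≤ r a c := by
  intro c b hc hcb hb
  induction b with
  | zero => omega
  | succ b ih =>
    rcases Nat.lt_or_ge c (b+1) with h | h
    · have h1 : r a (b+1) + 1 ≤ r a b := r_row hr ha (by omega) (by omega)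
      have h2 := ih (by omega) (by omega)
      omega
    · have h2 : c = b + 1 := by omega
      rw [h2]

end ShiftFacts
end Comb
section Comb2
variable {n k : ℕ}

lemma Npl_card (ε : Fin n → Bool) (t : ℕ) :
    Npl n ε t = ((Finset.Icc t n).filter fun s => posVal ε s = true).card := by
  rw [Finset.card_filter, Npl]

lemma card_fin_icc (ε : Fin n → Bool) :
    (Finset.univ.filter fun u : Fin n => ε u = true).card
      = ((Finset.Icc 1 n).filter fun s => posVal ε s = true).card := by
  refine Finset.card_bij (fun u _ => (u : ℕ) + 1) ?_ ?_ ?_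
  · intro u hu
    simp only [Finset.mem_filter, Finset.mem_univ, true_and] at hu
    simp only [Finset.mem_filter, Finset.mem_Icc]
    refine ⟨⟨by omega, by omega⟩, ?_⟩
    rw [posVal_pos ε (by omega) (by omega)]
    simpa using hu
  · intro a _ b _ hab
    simp only [add_left_inj] at hab
    exact Fin.ext (by exact_mod_cast hab)
  · intro s hs
    simp only [Finset.mem_filter, Finset.mem_Icc] at hs
    obtain ⟨⟨h1, h2⟩, h3⟩ := hs
    refine ⟨⟨s - 1, by omega⟩, ?_, by simp; omega⟩
    simp only [Finset.mem_filter, Finset.mem_univ, true_and]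
    rw [posVal_pos ε h1 h2] at h3
    exact h3

lemma Npl_one_eq (ε : Stt n k) : Npl n ε.1 1 = k := by
  rw [Npl_card, ← card_fin_icc, ε.2]

lemma Npl_zero_of_gt (ε : Fin n → Bool) {t : ℕ} (h : n < t) : Npl n ε t = 0 := by
  rw [Npl, Finset.Icc_eq_empty (by omega), Finset.sum_empty]

lemma Npl_succ (ε : Fin n → Bool) {t : ℕ} (h1 : 1 ≤ t) (h2 : t ≤ n) :
    Npl n ε t = (if posVal ε t = true then 1 else 0) + Npl n ε (t + 1) := by
  rw [Npl, Npl, ← Finset.sum_erase_add _ _ (Finset.mem_Icc.mpr ⟨le_rfl, h2⟩),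
    Finset.Icc_erase_left, ← Finset.Icc_add_one_left_eq_Ioc]
  ring

lemma Npl_lower (ε : Stt n k) : ∀ t, 1 ≤ t → t ≤ n + 1 → k ≤ Npl n ε.1 t + (t - 1) := by
  intro t
  induction t with
  | zero => omega
  | succ t ih =>
    intro _ h2
    rcases Nat.eq_zero_or_pos t with h | h
    · subst h; rw [Npl_one_eq]; omega
    · have h3 := ih h (by omega)
      rw [Npl_succ ε.1 h (by omega)] at h3
      split at h3 <;> omega

lemma Npl_exists_plus (ε : Fin n → Bool) : ∀ t' t, 1 ≤ t → t ≤ t' → t' ≤ n + 1 →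
    Npl n ε t' < Npl n ε t → ∃ s, t ≤ s ∧ s < t' ∧ posVal ε s = true := by
  intro t'
  induction t' with
  | zero => omega
  | succ t' ih =>
    intro t h1 h2 h3 h4
    rcases Nat.lt_or_ge t (t'+1) with h | h
    · by_cases hp : posVal ε t' = true
      · exact ⟨t', by omega, by omega, hp⟩
      · have h5 : Npl n ε t' = Npl n ε (t'+1) := by
          rw [Npl_succ ε (by omega) (by omega), if_neg hp, zero_add]
        exact (ih t h1 (by omega) (by omega) (by omega)).imp
            fun s ⟨a, b, c⟩ => ⟨a, by omega, c⟩
    · have he : t = t' + 1 := by omega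
      subst he; omega

section Shape
variable {lam : ℕ → ℕ} {i j : ℕ}

lemma muP_lt {a : ℕ} (h : a < i) : muP lam i j a = lam a := if_pos h
lemma muP_eqi : muP lam i j i = j := by simp [muP]
lemma muP_gt {a : ℕ} (h : i < a) : muP lam i j a = 0 := by
  unfold muP
  rw [if_neg (by omega), if_neg (by omega)]

lemma muP_row_end (h : lam i = j) : muP lam i j = muP lam (i+1) 0 := by
  funext a
  rcases Nat.lt_trichotomy a i with h1 | h1 | h1
  · rw [muP_lt h1, muP_lt (by omega)]
  · subst h1; rw [muP_eqi, muP_lt (by omega), h]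
  · rw [muP_gt h1]
    rcases Nat.lt_or_ge a (i+1+1) with h2 | h2
    · have : a = i + 1 := by omega
      subst this; rw [muP_eqi]
    · rw [muP_gt (by omega)]

lemma mu_le_lam (hY : IsYoung n k lam) (hj : j ≤ lam i) (hi : 1 ≤ i) :
    ∀ a, 1 ≤ a → muP lam i j a ≤ lam a := by
  intro a ha
  rcases Nat.lt_trichotomy a i with h1 | h1 | h1
  · rw [muP_lt h1]
  · subst h1; rw [muP_eqi]; exact hj
  · rw [muP_gt h1]; omega

lemma mu_anti (hY : IsYoung n k lam) (hj : j ≤ lam i) (hi : 1 ≤ i) :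
    ∀ a, 1 ≤ a → muP lam i j (a + 1) ≤ muP lam i j a := by
  intro a ha
  rcases Nat.lt_trichotomy (a+1) i with h1 | h1 | h1
  · rw [muP_lt h1, muP_lt (by omega)]; exact hY.1 a ha
  · rw [← h1, muP_eqi, muP_lt (by omega)]
    rw [← h1] at hj
    exact le_trans hj (lam_anti hY a (a+1) ha (by omega))
  · rw [muP_gt h1]; omega

end Shape

section Afacts
variable {mu : ℕ → ℕ}

lemma Aof_eq {a : ℕ} (h : a ≤ k) : Aof k mu a = k + mu a + 1 - a := if_pos h
lemma Aof_out {a : ℕ} (h : k < a) : Aof k mu a = 0 := if_neg (by omega)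

lemma Aof_pos {a : ℕ} (h1 : 1 ≤ a) (h2 : a ≤ k) : 1 ≤ Aof k mu a := by
  rw [Aof_eq h2]; omega

lemma Aof_le_n {a : ℕ} (h1 : 1 ≤ a) (h2 : a ≤ k) (h3 : mu a ≤ n - k) (hkn : k < n) :
    Aof k mu a ≤ n := by
  rw [Aof_eq h2]; omega

lemma Aof_strict_anti (hanti : ∀ a, 1 ≤ a → mu (a + 1) ≤ mu a) {a : ℕ}
    (h1 : 1 ≤ a) (h2 : a ≤ k) : Aof k mu (a + 1) < Aof k mu a := by
  rcases Nat.lt_or_ge a k with h | h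
  · rw [Aof_eq h2, Aof_eq (by omega)]
    have := hanti a h1
    omega
  · rw [Aof_out (by omega)]
    exact Aof_pos h1 h2

lemma Aof_anti (hanti : ∀ a, 1 ≤ a → mu (a + 1) ≤ mu a) {a b : ℕ}
    (h1 : 1 ≤ a) (h2 : a ≤ b) (h3 : b ≤ k) : Aof k mu b ≤ Aof k mu a := by
  induction b with
  | zero => omega
  | succ b ih =>
    rcases Nat.lt_or_ge a (b+1) with h | h
    · exact le_trans (le_of_lt (Aof_strict_anti hanti (by omega) (by omega))) (ih (by omega) (by omega))
    · have he : a = b + 1 := by omega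
      rw [he]

lemma Aof_inj (hanti : ∀ a, 1 ≤ a → mu (a + 1) ≤ mu a) {a b : ℕ}
    (ha1 : 1 ≤ a) (ha2 : a ≤ k) (hb1 : 1 ≤ b) (hb2 : b ≤ k) (h : Aof k mu a = Aof k mu b) :
    a = b := by
  rcases Nat.lt_trichotomy a b with h1 | h1 | h1
  · have h2 : Aof k mu b ≤ Aof k mu (a+1) := Aof_anti hanti (by omega) (by omega) hb2
    have h3 := Aof_strict_anti hanti ha1 ha2
    omega
  · exact h1
  · have h2 : Aof k mu a ≤ Aof k mu (b+1) := Aof_anti hanti (by omega) (by omega) ha2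
    have h3 := Aof_strict_anti hanti hb1 hb2
    omega

end Afacts
end Comb2
section Comb3
variable {n k : ℕ} {lam : ℕ → ℕ} {i j m : ℕ}

/-! ### swap action facts -/

lemma posVal_actE_sperm (ε : Fin n → Bool) (hm1 : 1 ≤ m) (hmn : m < n) (t : ℕ) :
    posVal (actE (sperm n m) ε) t
      = if t = m then posVal ε (m+1) else if t = m+1 then posVal ε m else posVal ε t := by
  have hsp : sperm n m = Equiv.swap ⟨m - 1, by omega⟩ ⟨m, hmn⟩ := dif_pos ⟨hm1, hmn⟩
  by_cases ht : 1 ≤ t ∧ t ≤ n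
  · rw [posVal_pos _ ht.1 ht.2]
    unfold actE
    rw [hsp, Equiv.swap_inv]
    rcases eq_or_ne t m with htm | htm
    · have he : (⟨t - 1, by omega⟩ : Fin n) = ⟨m - 1, by omega⟩ :=
        Fin.ext (show t - 1 = m - 1 by omega)
      rw [if_pos htm, he, Equiv.swap_apply_left, posVal_pos _ (by omega) (by omega)]
      congr 1
    · rcases eq_or_ne t (m+1) with htm1 | htm1
      · have he : (⟨t - 1, by omega⟩ : Fin n) = (⟨m, hmn⟩ : Fin n) :=
          Fin.ext (show t - 1 = m by omega)
        rw [if_neg htm, if_pos htm1, he, Equiv.swap_apply_right,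
          posVal_pos _ (by omega) (by omega)]
      · rw [if_neg htm, if_neg htm1, posVal_pos _ ht.1 ht.2]
        congr 1
        exact Equiv.swap_apply_of_ne_of_ne (fun h => htm (by
            have := congrArg Fin.val h; simp at this; omega))
          (fun h => htm1 (by have := congrArg Fin.val h; simp at this; omega))
  · rw [posVal_neg _ ht, if_neg (by omega), if_neg (by omega), posVal_neg _ ht]

lemma Npl_swap_out (ε : Fin n → Bool) (hm1 : 1 ≤ m) (hmn : m < n) {t : ℕ}
    (h : t ≤ m ∨ m + 2 ≤ t) : Npl n (actE (sperm n m) ε) t = Npl n ε t := by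
  rcases h with h | h
  · unfold Npl
    refine Finset.sum_equiv (Equiv.swap m (m+1)) ?_ ?_
    · intro s
      simp only [Finset.mem_Icc]
      rcases eq_or_ne s m with rfl | h1
      · rw [Equiv.swap_apply_left]; omega
      rcases eq_or_ne s (m+1) with rfl | h2
      · rw [Equiv.swap_apply_right]; omega
      · rw [Equiv.swap_apply_of_ne_of_ne h1 h2]
    · intro s _
      rw [posVal_actE_sperm ε hm1 hmn]
      rcases eq_or_ne s m with rfl | h1
      · rw [Equiv.swap_apply_left, if_pos rfl]
      rcases eq_or_ne s (m+1) with rfl | h2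
      · rw [Equiv.swap_apply_right, if_neg h1, if_pos rfl]
      · rw [Equiv.swap_apply_of_ne_of_ne h1 h2, if_neg h1, if_neg h2]
  · unfold Npl
    refine Finset.sum_congr rfl ?_
    intro s hs
    simp only [Finset.mem_Icc] at hs
    rw [posVal_actE_sperm ε hm1 hmn, if_neg (show ¬(s = m) by omega),
      if_neg (show ¬(s = m + 1) by omega)]

lemma Npl_swap_m1 (ε : Fin n → Bool) (hm1 : 1 ≤ m) (hmn : m + 1 ≤ n) :
    Npl n (actE (sperm n m) ε) (m+1)
      = (if posVal ε m = true then 1 else 0) + Npl n ε (m+2) := by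
  rw [Npl_succ _ (by omega) hmn, posVal_actE_sperm ε hm1 (by omega)]
  rw [if_neg (show ¬(m + 1 = m) by omega), if_pos rfl,
    Npl_swap_out ε hm1 (by omega) (Or.inr le_rfl)]

/-! ### A values for the partial shapes -/

section Avals
variable (hY : IsYoung n k lam) (hk : 0 < k) (hkn : k < n)
  (hi : 1 ≤ i) (hik : i ≤ k) (hj : j < lam i) (hm : m + i = k + j + 1)

include hik hm in
lemma A_mu_i : Aof k (muP lam i j) i = m := by
  rw [Aof_eq hik, muP_eqi]; omega

include hik hm in
lemma A_mu'_i : Aof k (muP lam i (j+1)) i = m + 1 := by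
  rw [Aof_eq hik, muP_eqi]; omega

omit hY hk hkn hi hj hm in
include hik in
lemma A_mu_isucc (j' : ℕ) : Aof k (muP lam i j') (i+1) = k - i := by
  rcases Nat.lt_or_ge i k with h | h
  · rw [Aof_eq (by omega), muP_gt (by omega)]; omega
  · rw [Aof_out (by omega)]; omega

omit hk hkn hm in
include hY hi hik hj in
lemma A_mu_lt (j' : ℕ) {a : ℕ} (ha1 : 1 ≤ a) (ha2 : a < i) (hm : m + i = k + j + 1) :
    m + 2 ≤ Aof k (muP lam i j') a := by
  rw [Aof_eq (by omega), muP_lt ha2]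
  have h1 : lam i ≤ lam a := lam_anti hY a i ha1 (by omega)
  omega

omit hY hk hkn hi hj hm in
lemma A_mu_gt (j' : ℕ) {a : ℕ} (ha : i < a) : Aof k (muP lam i j') a ≤ k - i := by
  rcases Nat.lt_or_ge k a with h | h
  · rw [Aof_out h]; omega
  · rw [Aof_eq h, muP_gt ha]; omega

omit hY hk hkn hi hj in
include hik hm in
lemma km_lt_m : k - i < m := by omega

omit hY hk hkn hj in
include hi hik hm in
lemma m_pos : 1 ≤ m := by omega

omit hk hik in
include hY hkn hi hj hm in
lemma m1_le_n : m + 1 ≤ n := by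
  have h1 : lam i ≤ n - k := lam_le_nk hY i hi
  omega

end Avals

/-! ### eta facts -/

section EtaFacts
variable (hY : IsYoung n k lam) (hkn : k < n)
  (hi : 1 ≤ i) (hik : i ≤ k) (hj : j < lam i) (hm : m + i = k + j + 1)

omit hY hkn hi hik hj hm in
lemma posVal_eta_iff (mu : ℕ → ℕ) {t : ℕ} (h1 : 1 ≤ t) (h2 : t ≤ n) :
    posVal (etaSeq n k mu) t = true ↔ ∃ a, 1 ≤ a ∧ a ≤ k ∧ t = Aof k mu a := by
  rw [posVal_pos _ h1 h2]
  unfold etaSeq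
  rw [decide_eq_true_eq]
  constructor
  · rintro ⟨a, ha1, ha2, ha3⟩
    have ha3' : t - 1 + 1 = Aof k mu a := ha3
    exact ⟨a, ha1, ha2, by omega⟩
  · rintro ⟨a, ha1, ha2, ha3⟩
    refine ⟨a, ha1, ha2, ?_⟩
    show t - 1 + 1 = Aof k mu a
    omega

include hY hkn hi hik hj hm in
lemma eta_m_true : posVal (etaSeq n k (muP lam i j)) m = true := by
  rw [posVal_eta_iff _ (m_pos hi hik hm) (by have := m1_le_n hY hkn hi hj hm; omega)]
  exact ⟨i, hi, hik, (A_mu_i hik hm).symm⟩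

include hY hkn hi hik hj hm in
lemma eta_m1_false : posVal (etaSeq n k (muP lam i j)) (m+1) = false := by
  rw [← Bool.not_eq_true]
  rw [posVal_eta_iff _ (by omega) (m1_le_n hY hkn hi hj hm)]
  rintro ⟨a, ha1, ha2, ha3⟩
  rcases Nat.lt_trichotomy a i with h | h | h
  · have := A_mu_lt hY hi hik hj j ha1 h hm
    omega
  · subst h
    rw [A_mu_i hik hm] at ha3
    omega
  · have h1 := A_mu_gt (k := k) (lam := lam) (i := i) j h
    have h2 := km_lt_m hik hm
    omega

include hY hkn hi hik hj hm in
lemma eta_m1'_true : posVal (etaSeq n k (muP lam i (j+1))) (m+1) = true := by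
  rw [posVal_eta_iff _ (by omega) (m1_le_n hY hkn hi hj hm)]
  exact ⟨i, hi, hik, (A_mu'_i hik hm).symm⟩

include hY hkn hi hik hj hm in
lemma eta_m'_false : posVal (etaSeq n k (muP lam i (j+1))) m = false := by
  rw [← Bool.not_eq_true]
  rw [posVal_eta_iff _ (m_pos hi hik hm) (by have := m1_le_n hY hkn hi hj hm; omega)]
  rintro ⟨a, ha1, ha2, ha3⟩
  rcases Nat.lt_trichotomy a i with h | h | h
  · have := A_mu_lt hY hi hik hj (j+1) ha1 h hm
    omega
  · subst h
    rw [A_mu'_i hik hm] at ha3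
    omega
  · have h1 := A_mu_gt (k := k) (lam := lam) (i := i) (j+1) h
    have h2 := km_lt_m hik hm
    omega

include hY hkn hi hik hj hm in
lemma eta_other {t : ℕ} (h1 : t ≠ m) (h2 : t ≠ m + 1) :
    posVal (etaSeq n k (muP lam i j)) t = posVal (etaSeq n k (muP lam i (j+1))) t := by
  by_cases ht : 1 ≤ t ∧ t ≤ n
  · have key : ∀ a, 1 ≤ a → a ≤ k →
        (t = Aof k (muP lam i j) a ↔ t = Aof k (muP lam i (j+1)) a) := by
      intro a ha1 ha2
      rcases Nat.lt_trichotomy a i with h | h | h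
      · rw [Aof_eq ha2, Aof_eq ha2, muP_lt h, muP_lt h]
      · subst h
        rw [A_mu_i hik hm, A_mu'_i hik hm]
        omega
      · rw [Aof_eq ha2, Aof_eq ha2, muP_gt h, muP_gt h]
    by_cases h : posVal (etaSeq n k (muP lam i j)) t = true
    · rw [h]
      symm
      rw [posVal_eta_iff _ ht.1 ht.2] at h
      obtain ⟨a, ha1, ha2, ha3⟩ := h
      rw [posVal_eta_iff _ ht.1 ht.2]
      exact ⟨a, ha1, ha2, (key a ha1 ha2).mp ha3⟩
    · have h0 : posVal (etaSeq n k (muP lam i j)) t = false := by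
        simpa using h
      rw [h0]
      symm
      rw [← Bool.not_eq_true, posVal_eta_iff _ ht.1 ht.2]
      rintro ⟨a, ha1, ha2, ha3⟩
      exact h (by
        rw [posVal_eta_iff _ ht.1 ht.2]
        exact ⟨a, ha1, ha2, (key a ha1 ha2).mpr ha3⟩)
  · rw [posVal_neg _ ht, posVal_neg _ ht]

include hY hkn hi hik hj hm in
lemma eta_swap :
    actE (sperm n m) (etaSeq n k (muP lam i j)) = etaSeq n k (muP lam i (j+1)) := by
  have hmn : m < n := by have := m1_le_n hY hkn hi hj hm; omega
  apply posVal_ext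
  intro t ht1 ht2
  rw [posVal_actE_sperm _ (m_pos hi hik hm) hmn]
  rcases eq_or_ne t m with rfl | h1
  · rw [if_pos rfl, eta_m1_false hY hkn hi hik hj hm, eta_m'_false hY hkn hi hik hj hm]
  rcases eq_or_ne t (m+1) with rfl | h2
  · rw [if_neg h1, if_pos rfl, eta_m_true hY hkn hi hik hj hm,
      eta_m1'_true hY hkn hi hik hj hm]
  · rw [if_neg h1, if_neg h2]
    exact eta_other hY hkn hi hik hj hm h1 h2

end EtaFacts
end Comb3
section Comb4
variable {n k : ℕ} {lam : ℕ → ℕ} {i j m : ℕ}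

lemma Npl_eta (mu : ℕ → ℕ) (hanti : ∀ a, 1 ≤ a → mu (a+1) ≤ mu a)
    (hb : ∀ a, 1 ≤ a → a ≤ k → mu a ≤ n - k) (hkn : k < n) (t : ℕ) :
    Npl n (etaSeq n k mu) t = ((Finset.Icc 1 k).filter fun a => t ≤ Aof k mu a).card := by
  rw [Npl_card]
  symm
  refine Finset.card_bij (fun a _ => Aof k mu a) ?_ ?_ ?_
  · intro a ha
    simp only [Finset.mem_filter, Finset.mem_Icc] at ha ⊢
    obtain ⟨⟨ha1, ha2⟩, ha3⟩ := ha
    refine ⟨⟨ha3, Aof_le_n ha1 ha2 (hb a ha1 ha2) hkn⟩, ?_⟩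
    rw [posVal_eta_iff _ (Aof_pos ha1 ha2) (Aof_le_n ha1 ha2 (hb a ha1 ha2) hkn)]
    exact ⟨a, ha1, ha2, rfl⟩
  · intro a ha b hb'
    simp only [Finset.mem_filter, Finset.mem_Icc] at ha hb'
    exact Aof_inj hanti ha.1.1 ha.1.2 hb'.1.1 hb'.1.2
  · intro s hs
    simp only [Finset.mem_filter, Finset.mem_Icc] at hs
    obtain ⟨⟨hs1, hs2⟩, hs3⟩ := hs
    have hs0 : 1 ≤ s := by
      by_contra hcon
      rw [posVal_neg _ (by omega)] at hs3
      simp at hs3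
    rw [posVal_eta_iff mu (t := s) (by omega) (by omega)] at hs3
    obtain ⟨a, ha1, ha2, ha3⟩ := hs3
    exact ⟨a, by simp only [Finset.mem_filter, Finset.mem_Icc]; exact ⟨⟨ha1, ha2⟩, by omega⟩,
      ha3.symm⟩

lemma eta_card (mu : ℕ → ℕ) (hanti : ∀ a, 1 ≤ a → mu (a+1) ≤ mu a)
    (hb : ∀ a, 1 ≤ a → a ≤ k → mu a ≤ n - k) (hkn : k < n) :
    (Finset.univ.filter fun u : Fin n => etaSeq n k mu u = true).card = k := by
  rw [card_fin_icc, ← Npl_card, Npl_eta mu hanti hb hkn 1]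
  rw [Finset.filter_true_of_mem, Nat.card_Icc]
  · omega
  · intro a ha
    simp only [Finset.mem_Icc] at ha
    exact Aof_pos ha.1 ha.2

section Box
variable (hY : IsYoung n k lam) (hkn : k < n)
  (hi : 1 ≤ i) (hik : i ≤ k) (hj : j < lam i) (hm : m + i = k + j + 1)

include hY hi hik in
lemma mu_anti_box (j' : ℕ) (hj' : j' ≤ lam i) :
    ∀ a, 1 ≤ a → muP lam i j' (a+1) ≤ muP lam i j' a :=
  mu_anti hY hj' hi

include hY hi hik in
lemma mu_bdd_box (j' : ℕ) (hj' : j' ≤ lam i) :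
    ∀ a, 1 ≤ a → a ≤ k → muP lam i j' a ≤ n - k := fun a ha _ =>
  le_trans (mu_le_lam hY hj' hi a ha) (lam_le_nk hY a ha)

include hY hkn hi hik hj hm in
lemma cnt_m : Npl n (etaSeq n k (muP lam i j)) m = i := by
  rw [Npl_eta _ (mu_anti_box hY hi hik j (by omega)) (mu_bdd_box hY hi hik j (by omega)) hkn]
  have he : ((Finset.Icc 1 k).filter fun a => m ≤ Aof k (muP lam i j) a) = Finset.Icc 1 i := by
    ext a
    simp only [Finset.mem_filter, Finset.mem_Icc]
    constructor
    · rintro ⟨⟨h1, h2⟩, h3⟩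
      refine ⟨h1, ?_⟩
      by_contra hcon
      have h4 := A_mu_gt (k := k) (lam := lam) (i := i) j (a := a) (by omega)
      have h5 := km_lt_m hik hm
      omega
    · rintro ⟨h1, h2⟩
      refine ⟨⟨h1, by omega⟩, ?_⟩
      have h3 : Aof k (muP lam i j) i ≤ Aof k (muP lam i j) a :=
        Aof_anti (mu_anti_box hY hi hik j (by omega)) h1 h2 hik
      rw [A_mu_i hik hm] at h3
      exact h3
  rw [he, Nat.card_Icc]
  omega

include hY hkn hi hik hj hm in
lemma cnt_m1 : Npl n (etaSeq n k (muP lam i j)) (m+1) + 1 = i := by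
  rw [Npl_eta _ (mu_anti_box hY hi hik j (by omega)) (mu_bdd_box hY hi hik j (by omega)) hkn]
  have he : ((Finset.Icc 1 k).filter fun a => m + 1 ≤ Aof k (muP lam i j) a)
      = Finset.Icc 1 (i - 1) := by
    ext a
    simp only [Finset.mem_filter, Finset.mem_Icc]
    constructor
    · rintro ⟨⟨h1, h2⟩, h3⟩
      refine ⟨h1, ?_⟩
      by_contra hcon
      rcases Nat.lt_or_ge i a with h | h
      · have h4 := A_mu_gt (k := k) (lam := lam) (i := i) j (a := a) h
        have h5 := km_lt_m hik hm
        omega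
      · have ha : a = i := by omega
        subst ha
        rw [A_mu_i hik hm] at h3
        omega
    · rintro ⟨h1, h2⟩
      have h3 := A_mu_lt hY hi hik hj j h1 (by omega) hm
      exact ⟨⟨h1, by omega⟩, by omega⟩
  rw [he, Nat.card_Icc]
  omega

include hY hkn hi hik hj hm in
lemma cnt_m1' : Npl n (etaSeq n k (muP lam i (j+1))) (m+1) = i := by
  rw [Npl_eta _ (mu_anti_box hY hi hik (j+1) (by omega)) (mu_bdd_box hY hi hik (j+1) (by omega)) hkn]
  have he : ((Finset.Icc 1 k).filter fun a => m + 1 ≤ Aof k (muP lam i (j+1)) a)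
      = Finset.Icc 1 i := by
    ext a
    simp only [Finset.mem_filter, Finset.mem_Icc]
    constructor
    · rintro ⟨⟨h1, h2⟩, h3⟩
      refine ⟨h1, ?_⟩
      by_contra hcon
      have h4 := A_mu_gt (k := k) (lam := lam) (i := i) (j+1) (a := a) (by omega)
      have h5 := km_lt_m hik hm
      omega
    · rintro ⟨h1, h2⟩
      refine ⟨⟨h1, by omega⟩, ?_⟩
      have h3 : Aof k (muP lam i (j+1)) i ≤ Aof k (muP lam i (j+1)) a :=
        Aof_anti (mu_anti_box hY hi hik (j+1) (by omega)) h1 h2 hik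
      rw [A_mu'_i hik hm] at h3
      exact h3
  rw [he, Nat.card_Icc]
  omega

include hY hkn hi hik hj hm in
lemma cnt_mono (t : ℕ) :
    Npl n (etaSeq n k (muP lam i j)) t ≤ Npl n (etaSeq n k (muP lam i (j+1))) t := by
  rw [Npl_eta _ (mu_anti_box hY hi hik j (by omega)) (mu_bdd_box hY hi hik j (by omega)) hkn,
    Npl_eta _ (mu_anti_box hY hi hik (j+1) (by omega)) (mu_bdd_box hY hi hik (j+1) (by omega)) hkn]
  apply Finset.card_le_card
  intro a ha
  simp only [Finset.mem_filter, Finset.mem_Icc] at ha ⊢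
  obtain ⟨ha, h⟩ := ha
  refine ⟨ha, le_trans h ?_⟩
  rcases eq_or_ne a i with rfl | hne
  · rw [A_mu_i hik hm, A_mu'_i hik hm]; omega
  · rcases Nat.lt_or_ge a i with h1 | h1
    · rw [Aof_eq ha.2, Aof_eq ha.2, muP_lt h1, muP_lt h1]
    · rw [Aof_eq ha.2, Aof_eq ha.2, muP_gt (by omega), muP_gt (by omega)]

include hY hkn hi hik hj hm in
lemma Supp_diag {ε : Fin n → Bool} (hs : Supp n k (muP lam i j) ε) :
    Supp n k (muP lam i (j+1)) ε :=
  fun t => le_trans (hs t) (cnt_mono hY hkn hi hik hj hm t)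

include hY hkn hi hik hj hm in
lemma Supp_swap_pm {ε : Fin n → Bool} (hs : Supp n k (muP lam i j) ε)
    (h1 : posVal ε m = true) (h2 : posVal ε (m+1) = false) :
    Supp n k (muP lam i (j+1)) (actE (sperm n m) ε) := by
  intro t
  have hmn := m1_le_n hY hkn hi hj hm
  have hm1 := m_pos hi hik hm
  rcases eq_or_ne t (m+1) with rfl | hne
  · rw [Npl_swap_m1 ε hm1 hmn, if_pos h1]
    have h3 : Npl n ε m = 1 + Npl n ε (m+2) := by
      rw [Npl_succ ε (by omega) (by omega), if_pos h1,
        Npl_succ ε (by omega) (by omega), if_neg (by rw [h2]; simp), zero_add]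
    have h4 := hs m
    rw [cnt_m hY hkn hi hik hj hm] at h4
    rw [cnt_m1' hY hkn hi hik hj hm]
    omega
  · rw [Npl_swap_out ε hm1 (by omega) (by omega)]
    exact le_trans (hs t) (cnt_mono hY hkn hi hik hj hm t)

include hY hkn hi hik hj hm in
lemma Supp_swap_mp {ε : Fin n → Bool} (hs : Supp n k (muP lam i j) ε)
    (h1 : posVal ε m = false) (h2 : posVal ε (m+1) = true) :
    Supp n k (muP lam i (j+1)) (actE (sperm n m) ε) := by
  intro t
  have hmn := m1_le_n hY hkn hi hj hm
  have hm1 := m_pos hi hik hm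
  rcases eq_or_ne t (m+1) with rfl | hne
  · rw [Npl_swap_m1 ε hm1 hmn, if_neg (by rw [h1]; simp)]
    have h3 : Npl n ε (m+1) = 1 + Npl n ε (m+2) := by
      rw [Npl_succ ε (by omega) (by omega), if_pos h2]
    have h4 := hs (m+1)
    refine le_trans (by omega) (le_trans h4 (cnt_mono hY hkn hi hik hj hm (m+1)))
  · rw [Npl_swap_out ε hm1 (by omega) (by omega)]
    exact le_trans (hs t) (cnt_mono hY hkn hi hik hj hm t)

include hY hkn hi hik hj hm in
lemma F1_vac (hi1 : i = 1) {ε : Fin n → Bool} (hs : Supp n k (muP lam i j) ε) :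
    posVal ε (m+1) = false := by
  have hmn := m1_le_n hY hkn hi hj hm
  have h4 := hs (m+1)
  have h5 := cnt_m1 hY hkn hi hik hj hm
  rw [Npl_succ ε (by omega) (by omega)] at h4
  by_contra hcon
  rw [if_pos (by simpa using hcon)] at h4
  omega

include hY hkn hi hik hj hm in
lemma F2_plus (hj0 : j = 0) (ε : Stt n k) (hs : Supp n k (muP lam i j) ε.1) :
    posVal ε.1 m = true := by
  have hmn := m1_le_n hY hkn hi hj hm
  have hm1 := m_pos hi hik hm
  by_contra hcon
  have h4 := hs (m+1)
  have h5 := cnt_m1 hY hkn hi hik hj hm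
  have h6 : Npl n ε.1 m = Npl n ε.1 (m+1) := by
    rw [Npl_succ ε.1 (by omega) (by omega), if_neg hcon, zero_add]
  have h7 := Npl_lower ε m (by omega) (by omega)
  omega

include hY hkn hi hik hj hm in
lemma F3_exists (hj1 : 1 ≤ j) (ε : Stt n k) (hs : Supp n k (muP lam i j) ε.1)
    (h1 : posVal ε.1 m = false) :
    ∃ t0, k - i < t0 ∧ t0 < m ∧ posVal ε.1 t0 = true := by
  have hmn := m1_le_n hY hkn hi hj hm
  have hm1 := m_pos hi hik hm
  have hkim := km_lt_m hik hm
  have h4 := hs (m+1)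
  have h5 := cnt_m1 hY hkn hi hik hj hm
  have h6 : Npl n ε.1 m = Npl n ε.1 (m+1) := by
    rw [Npl_succ ε.1 (by omega) (by omega), if_neg (by rw [h1]; simp), zero_add]
  have h7 := Npl_lower ε (k - i + 1) (by omega) (by omega)
  have h8 := Npl_exists_plus ε.1 m (k - i + 1) (by omega) (by omega) (by omega) (by omega)
  obtain ⟨s, hs1, hs2, hs3⟩ := h8
  exact ⟨s, by omega, hs2, hs3⟩

end Box
end Comb4
section Comb5
variable {n k : ℕ} {lam : ℕ → ℕ} {r : ℕ → ℕ → ℕ} {i j m : ℕ}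

section Box5
variable (hY : IsYoung n k lam) (hkn : k < n)
  (hi : 1 ≤ i) (hik : i ≤ k) (hj : j < lam i) (hm : m + i = k + j + 1)

omit hY hkn hi hj hm in
include hik in
lemma mu_eq_away {a : ℕ} (j1 j2 : ℕ) (hne : a ≠ i) : muP lam i j1 a = muP lam i j2 a := by
  rcases Nat.lt_or_ge a i with h | h
  · rw [muP_lt h, muP_lt h]
  · rw [muP_gt (by omega), muP_gt (by omega)]

-- Rows away from `i-1, i` contribute identically.
include hY hi hik hj hm in
lemma rowW_away (j1 j2 : ℕ) (hj1 : j1 ≤ lam i) (hj2 : j2 ≤ lam i)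
    (ε ζ : Fin n → Bool) (hagree : ∀ t, t ≠ m → t ≠ m + 1 → posVal ε t = posVal ζ t)
    {a : ℕ} (ha1 : 1 ≤ a) (ha2 : a ≤ k) (hne1 : a ≠ i) (hne2 : a + 1 ≠ i) :
    rowW n k r (muP lam i j1) ε a = rowW n k r (muP lam i j2) ζ a := by
  have hmu1 : muP lam i j1 a = muP lam i j2 a := mu_eq_away hik j1 j2 hne1
  have hmu2 : muP lam i j1 (a+1) = muP lam i j2 (a+1) := mu_eq_away hik j1 j2 hne2
  have hA1 : Aof k (muP lam i j1) a = Aof k (muP lam i j2) a := by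
    unfold Aof; rw [hmu1]
  have hA2 : Aof k (muP lam i j1) (a+1) = Aof k (muP lam i j2) (a+1) := by
    unfold Aof; rw [hmu2]
  have hout : ∀ t, (t = Aof k (muP lam i j1) a ∨ t ∈ Finset.Ioo (Aof k (muP lam i j1) (a+1))
      (Aof k (muP lam i j1) a)) → t ≠ m ∧ t ≠ m + 1 := by
    intro t hcase
    rcases Nat.lt_or_ge a i with h | h
    · -- a < i, a+1 < i (since a+1 ≠ i): both A values ≥ m+2
      have h1 : a + 1 < i := by omega
      have hA := A_mu_lt hY hi hik hj j1 (a := a) ha1 h hm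
      have hAs := A_mu_lt hY hi hik hj j1 (a := a+1) (by omega) h1 hm
      rcases hcase with h2 | h2
      · omega
      · simp only [Finset.mem_Ioo] at h2
        omega
    · -- a > i : A value ≤ k - i < m
      have hA := A_mu_gt (k := k) (lam := lam) (i := i) j1 (a := a) (by omega)
      have hkim := km_lt_m hik hm
      rcases hcase with h2 | h2
      · omega
      · simp only [Finset.mem_Ioo] at h2
        omega
  rw [hA1, hA2] at hout
  unfold rowW
  rw [hA1, hA2, hmu1]
  congr 1
  · have h5 := hout (Aof k (muP lam i j2) a) (Or.inl rfl)
    rw [hagree _ h5.1 h5.2]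
  · refine Finset.sum_congr rfl ?_
    intro t ht
    have h5 := hout t (Or.inr ht)
    rw [hagree t h5.1 h5.2]

include hik hm in
lemma rowi_mu (ε : Fin n → Bool) :
    rowW n k r (muP lam i j) ε i
      = (if posVal ε m = false ∧ 1 ≤ j then r i j - 1 else 0)
        + ∑ t ∈ Finset.Ioo (k - i) m, (if posVal ε t = true then r i (t + i - k) else 0) := by
  unfold rowW
  rw [A_mu_i hik hm, A_mu_isucc hik j, muP_eqi]

include hik hm in
lemma rowi_mu' (ε : Fin n → Bool) :
    rowW n k r (muP lam i (j+1)) ε i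
      = (if posVal ε (m+1) = false then r i (j+1) - 1 else 0)
        + ((if posVal ε m = true then r i (j+1) else 0)
           + ∑ t ∈ Finset.Ioo (k - i) m, (if posVal ε t = true then r i (t + i - k) else 0)) := by
  unfold rowW
  rw [A_mu'_i hik hm, A_mu_isucc hik (j+1), muP_eqi]
  have hkim := km_lt_m hik hm
  congr 1
  · refine if_congr ?_ rfl rfl
    constructor
    · exact fun h => h.1
    · exact fun h => ⟨h, by omega⟩
  · have hmem : m ∈ Finset.Ioo (k - i) (m + 1) := by
      simp only [Finset.mem_Ioo]; omega
    have herase : (Finset.Ioo (k - i) (m + 1)).erase m = Finset.Ioo (k - i) m := by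
      ext x
      simp only [Finset.mem_erase, Finset.mem_Ioo]
      omega
    rw [← Finset.sum_erase_add _ _ hmem, herase]
    have hexp : m + i - k = j + 1 := by omega
    rw [hexp]
    ring

include hY hi hik hj hm in
lemma rowim1_shape (hi2 : 2 ≤ i) (ε : Fin n → Bool) :
    rowW n k r (muP lam i j) ε (i-1)
      = rowW n k r (muP lam i (j+1)) ε (i-1)
        + (if posVal ε (m+1) = true then r (i-1) (j+1) else 0) := by
  have hii : i - 1 + 1 = i := by omega
  have hA1big : m + 2 ≤ Aof k (muP lam i j) (i-1) :=
    A_mu_lt hY hi hik hj j (by omega) (by omega) hm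
  have hmu : muP lam i j (i-1) = muP lam i (j+1) (i-1) := mu_eq_away hik j (j+1) (by omega)
  have hA : Aof k (muP lam i j) (i-1) = Aof k (muP lam i (j+1)) (i-1) := by
    unfold Aof; rw [hmu]
  unfold rowW
  rw [hii, A_mu_i hik hm, A_mu'_i hik hm, ← hA, hmu]
  have hmem : m + 1 ∈ Finset.Ioo m (Aof k (muP lam i j) (i-1)) := by
    simp only [Finset.mem_Ioo]; omega
  have herase : (Finset.Ioo m (Aof k (muP lam i j) (i-1))).erase (m+1)
      = Finset.Ioo (m+1) (Aof k (muP lam i j) (i-1)) := by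
    ext x
    simp only [Finset.mem_erase, Finset.mem_Ioo]
    omega
  rw [← Finset.sum_erase_add _ _ hmem, herase]
  have hexp : m + 1 + (i - 1) - k = j + 1 := by omega
  rw [hexp]
  ring

include hY hkn hi hik hj hm in
lemma rowim1_swap (hi2 : 2 ≤ i) (ε : Fin n → Bool) (h2 : posVal ε (m+1) = false) :
    rowW n k r (muP lam i j) (actE (sperm n m) ε) (i-1)
      = rowW n k r (muP lam i j) ε (i-1)
        + (if posVal ε m = true then r (i-1) (j+1) else 0) := by
  have hii : i - 1 + 1 = i := by omega
  have hm1 := m_pos hi hik hm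
  have hmn : m < n := by have := m1_le_n hY hkn hi hj hm; omega
  have hA1big : m + 2 ≤ Aof k (muP lam i j) (i-1) :=
    A_mu_lt hY hi hik hj j (by omega) (by omega) hm
  unfold rowW
  rw [hii, A_mu_i hik hm]
  have hmem : m + 1 ∈ Finset.Ioo m (Aof k (muP lam i j) (i-1)) := by
    simp only [Finset.mem_Ioo]; omega
  have herase : (Finset.Ioo m (Aof k (muP lam i j) (i-1))).erase (m+1)
      = Finset.Ioo (m+1) (Aof k (muP lam i j) (i-1)) := by
    ext x
    simp only [Finset.mem_erase, Finset.mem_Ioo]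
    omega
  rw [← Finset.sum_erase_add _ _ hmem, herase, ← Finset.sum_erase_add _ _ hmem, herase]
  have hexp : m + 1 + (i - 1) - k = j + 1 := by omega
  rw [hexp]
  rw [posVal_actE_sperm ε hm1 hmn (m+1), if_neg (show ¬(m+1=m) by omega), if_pos rfl]
  rw [posVal_actE_sperm ε hm1 hmn (Aof k (muP lam i j) (i-1)),
    if_neg (show ¬(Aof k (muP lam i j) (i-1) = m) by omega),
    if_neg (show ¬(Aof k (muP lam i j) (i-1) = m + 1) by omega)]
  rw [h2]
  have hsum : ∑ t ∈ Finset.Ioo (m+1) (Aof k (muP lam i j) (i-1)),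
      (if posVal (actE (sperm n m) ε) t = true then r (i-1) (t + (i-1) - k) else 0)
      = ∑ t ∈ Finset.Ioo (m+1) (Aof k (muP lam i j) (i-1)),
      (if posVal ε t = true then r (i-1) (t + (i-1) - k) else 0) := by
    refine Finset.sum_congr rfl ?_
    intro t ht
    simp only [Finset.mem_Ioo] at ht
    rw [posVal_actE_sperm ε hm1 hmn t, if_neg (show ¬(t=m) by omega),
      if_neg (show ¬(t=m+1) by omega)]
  rw [hsum]
  simp only [Bool.false_eq_true, if_false, add_zero]
  omega

include hY hkn hi hik hj hm in
lemma rowi_swap (ε : Fin n → Bool) :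
    rowW n k r (muP lam i j) (actE (sperm n m) ε) i
      = (if posVal ε (m+1) = false ∧ 1 ≤ j then r i j - 1 else 0)
        + ∑ t ∈ Finset.Ioo (k - i) m, (if posVal ε t = true then r i (t + i - k) else 0) := by
  have hm1 := m_pos hi hik hm
  have hmn : m < n := by have := m1_le_n hY hkn hi hj hm; omega
  rw [rowi_mu hik hm]
  rw [posVal_actE_sperm ε hm1 hmn m, if_pos rfl]
  congr 1
  refine Finset.sum_congr rfl ?_
  intro t ht
  simp only [Finset.mem_Ioo] at ht
  rw [posVal_actE_sperm ε hm1 hmn t, if_neg (show ¬(t=m) by omega),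
    if_neg (show ¬(t=m+1) by omega)]

-- the triple-sum decomposition of Wt
include hi hik in
lemma Wt_decomp (mu : ℕ → ℕ) (ε : Fin n → Bool) (hi2 : 2 ≤ i) :
    Wt n k r mu ε = (∑ a ∈ ((Finset.Icc 1 k).erase i).erase (i-1), rowW n k r mu ε a)
      + rowW n k r mu ε (i-1) + rowW n k r mu ε i := by
  unfold Wt
  rw [← Finset.sum_erase_add _ _ (show i ∈ Finset.Icc 1 k by simp; omega),
    ← Finset.sum_erase_add _ _
      (show i - 1 ∈ (Finset.Icc 1 k).erase i by simp [Finset.mem_erase]; omega)]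

include hi hik in
lemma Wt_decomp1 (mu : ℕ → ℕ) (ε : Fin n → Bool) :
    Wt n k r mu ε = (∑ a ∈ (Finset.Icc 1 k).erase i, rowW n k r mu ε a)
      + rowW n k r mu ε i := by
  unfold Wt
  rw [← Finset.sum_erase_add _ _ (show i ∈ Finset.Icc 1 k by simp; omega)]

include hY hi hik hj hm in
lemma away_sum (j1 j2 : ℕ) (hj1 : j1 ≤ lam i) (hj2 : j2 ≤ lam i)
    (ε ζ : Fin n → Bool) (hagree : ∀ t, t ≠ m → t ≠ m + 1 → posVal ε t = posVal ζ t)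
    (hi2 : 2 ≤ i) :
    ∑ a ∈ ((Finset.Icc 1 k).erase i).erase (i-1), rowW n k r (muP lam i j1) ε a
      = ∑ a ∈ ((Finset.Icc 1 k).erase i).erase (i-1), rowW n k r (muP lam i j2) ζ a := by
  refine Finset.sum_congr rfl ?_
  intro a ha
  simp only [Finset.mem_erase, Finset.mem_Icc] at ha
  exact rowW_away hY hi hik hj hm j1 j2 hj1 hj2 ε ζ hagree ha.2.2.1 ha.2.2.2 ha.2.1
    (by omega)

include hY hi hik hj hm in
lemma away_sum1 (j1 j2 : ℕ) (hj1 : j1 ≤ lam i) (hj2 : j2 ≤ lam i)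
    (ε ζ : Fin n → Bool) (hagree : ∀ t, t ≠ m → t ≠ m + 1 → posVal ε t = posVal ζ t)
    (hi1 : i = 1) :
    ∑ a ∈ (Finset.Icc 1 k).erase i, rowW n k r (muP lam i j1) ε a
      = ∑ a ∈ (Finset.Icc 1 k).erase i, rowW n k r (muP lam i j2) ζ a := by
  refine Finset.sum_congr rfl ?_
  intro a ha
  simp only [Finset.mem_erase, Finset.mem_Icc] at ha
  exact rowW_away hY hi hik hj hm j1 j2 hj1 hj2 ε ζ hagree ha.2.1 ha.2.2 ha.1
    (by omega)

-- The key Δ-lemma comparing the weights of the two shapes.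
include hY hkn hi hik hj hm in
lemma deltaW (ε : Fin n → Bool) :
    Wt n k r (muP lam i (j+1)) ε
        + (if posVal ε m = false ∧ 1 ≤ j then r i j - 1 else 0)
        + (if posVal ε (m+1) = true ∧ 2 ≤ i then r (i-1) (j+1) else 0)
      = Wt n k r (muP lam i j) ε
        + (if posVal ε (m+1) = false then r i (j+1) - 1 else 0)
        + (if posVal ε m = true then r i (j+1) else 0) := by
  rcases Nat.lt_or_ge i 2 with hi2 | hi2
  · have hi1 : i = 1 := by omega
    rw [Wt_decomp1 hi hik (muP lam i j) ε, Wt_decomp1 hi hik (muP lam i (j+1)) ε,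
      away_sum1 hY hi hik hj hm (j+1) j (by omega) (by omega) ε ε (fun _ _ _ => rfl) hi1,
      rowi_mu hik hm ε, rowi_mu' hik hm ε,
      if_neg (show ¬(posVal ε (m+1) = true ∧ 2 ≤ i) by omega)]
    omega
  · rw [Wt_decomp hi hik (muP lam i j) ε hi2, Wt_decomp hi hik (muP lam i (j+1)) ε hi2,
      away_sum hY hi hik hj hm (j+1) j (by omega) (by omega) ε ε (fun _ _ _ => rfl) hi2,
      rowi_mu hik hm ε, rowi_mu' hik hm ε,
      rowim1_shape hY hi hik hj hm hi2 ε]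
    have hcond : (if posVal ε (m+1) = true ∧ 2 ≤ i then r (i-1) (j+1) else 0)
        = (if posVal ε (m+1) = true then r (i-1) (j+1) else 0) := by
      rcases Bool.eq_false_or_eq_true (posVal ε (m+1)) with h | h <;> simp [h, hi2]
    rw [hcond]
    omega

-- The key swap lemma.
include hY hkn hi hik hj hm in
lemma swapW (ε : Fin n → Bool) (h1 : posVal ε m = true) (h2 : posVal ε (m+1) = false) :
    Wt n k r (muP lam i j) (actE (sperm n m) ε)
      = Wt n k r (muP lam i j) ε + (if 1 ≤ j then r i j - 1 else 0)
        + (if 2 ≤ i then r (i-1) (j+1) else 0) := by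
  have hm1 := m_pos hi hik hm
  have hmn : m < n := by have := m1_le_n hY hkn hi hj hm; omega
  have hagree : ∀ t, t ≠ m → t ≠ m + 1 → posVal (actE (sperm n m) ε) t = posVal ε t := by
    intro t ht1 ht2
    rw [posVal_actE_sperm ε hm1 hmn t, if_neg ht1, if_neg ht2]
  rcases Nat.lt_or_ge i 2 with hi2 | hi2
  · have hi1 : i = 1 := by omega
    rw [Wt_decomp1 hi hik (muP lam i j) (actE (sperm n m) ε),
      Wt_decomp1 hi hik (muP lam i j) ε,
      away_sum1 hY hi hik hj hm j j (by omega) (by omega) _ ε hagree hi1,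
      rowi_mu hik hm ε, rowi_swap hY hkn hi hik hj hm ε,
      if_neg (show ¬(2 ≤ i) by omega), h2, h1]
    simp
    omega
  · rw [Wt_decomp hi hik (muP lam i j) (actE (sperm n m) ε) hi2,
      Wt_decomp hi hik (muP lam i j) ε hi2,
      away_sum hY hi hik hj hm j j (by omega) (by omega) _ ε hagree hi2,
      rowi_mu hik hm ε, rowi_swap hY hkn hi hik hj hm ε,
      rowim1_swap hY hkn hi hik hj hm hi2 ε h2, h2, h1, if_pos hi2]
    simp
    omega

-- The weight of the leading sequence is zero.
include hY hkn hi hik in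
lemma Wt_eta_zero (j' : ℕ) (hj' : j' ≤ lam i) :
    Wt n k r (muP lam i j') (etaSeq n k (muP lam i j')) = 0 := by
  have hanti := mu_anti_box hY hi hik j' hj'
  have hbdd := mu_bdd_box hY hi hik j' hj'
  unfold Wt
  refine Finset.sum_eq_zero ?_
  intro a ha
  simp only [Finset.mem_Icc] at ha
  unfold rowW
  have hminus : ¬(posVal (etaSeq n k (muP lam i j')) (Aof k (muP lam i j') a) = false
      ∧ 1 ≤ muP lam i j' a) := by
    rintro ⟨hf, hmu⟩
    have hA1 : 1 ≤ Aof k (muP lam i j') a := Aof_pos ha.1 ha.2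
    have hA2 : Aof k (muP lam i j') a ≤ n := Aof_le_n ha.1 ha.2 (hbdd a ha.1 ha.2) hkn
    have : posVal (etaSeq n k (muP lam i j')) (Aof k (muP lam i j') a) = true := by
      rw [posVal_eta_iff _ hA1 hA2]
      exact ⟨a, ha.1, ha.2, rfl⟩
    rw [hf] at this
    exact Bool.false_ne_true this
  rw [if_neg hminus, zero_add]
  refine Finset.sum_eq_zero ?_
  intro t ht
  simp only [Finset.mem_Ioo] at ht
  have hA2 : Aof k (muP lam i j') a ≤ n := Aof_le_n ha.1 ha.2 (hbdd a ha.1 ha.2) hkn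
  have hfalse : posVal (etaSeq n k (muP lam i j')) t = false := by
    rw [← Bool.not_eq_true, posVal_eta_iff _ (by omega) (by omega)]
    rintro ⟨b, hb1, hb2, hb3⟩
    rcases le_or_gt b a with h | h
    · have := Aof_anti hanti hb1 h ha.2
      omega
    · have : Aof k (muP lam i j') b ≤ Aof k (muP lam i j') (a+1) := by
        rcases eq_or_ne b (a+1) with rfl | hne
        · exact le_rfl
        · rcases le_or_gt b k with hbk | hbk
          · exact Aof_anti hanti (by omega) (by omega) hbk
          · rw [Aof_out hbk]
            omega
      omega
  rw [hfalse]
  simp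

-- Single-term lower bound for the weight.
include hY hkn hi hik in
lemma Wt_ge_term (j' : ℕ) (hj' : j' ≤ lam i) (ε : Fin n → Bool) {t0 : ℕ}
    (h1 : k - i < t0) (h2 : t0 < Aof k (muP lam i j') i) (h3 : posVal ε t0 = true) :
    r i (t0 + i - k) ≤ Wt n k r (muP lam i j') ε := by
  unfold Wt
  calc r i (t0 + i - k)
      ≤ rowW n k r (muP lam i j') ε i := by
        unfold rowW
        rw [A_mu_isucc hik j']
        have hterm := Finset.single_le_sum (f := fun t =>
            (if posVal ε t = true then r i (t + i - k) else 0)) (fun x _ => Nat.zero_le _)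
            (show t0 ∈ Finset.Ioo (k - i) (Aof k (muP lam i j') i) by
              simp only [Finset.mem_Ioo]; omega)
        simp only [h3, if_true] at hterm
        omega
    _ ≤ _ := Finset.single_le_sum (f := fun a => rowW n k r (muP lam i j') ε a)
          (fun x _ => Nat.zero_le _) (show i ∈ Finset.Icc 1 k by simp; omega)

end Box5
end Comb5
example (x y : ℕ) (h : x + 2 ≤ y) : max x 1 + 1 ≤ max y 1 := by omega

section Comb6
variable {n k : ℕ} {lam : ℕ → ℕ} {r : ℕ → ℕ → ℕ} {i j m : ℕ}

lemma actE_mul {n : ℕ} (w w' : Equiv.Perm (Fin n)) (ε : Fin n → Bool) :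
    actE w (actE w' ε) = actE (w * w') ε := by
  funext u
  simp [actE, mul_inv_rev]

lemma sperm_invol (n m : ℕ) : sperm n m * sperm n m = 1 := by
  unfold sperm
  split
  · exact Equiv.swap_mul_self _ _
  · simp

lemma actE_one {n : ℕ} (ε : Fin n → Bool) : actE 1 ε = ε := by
  funext u
  simp [actE]

lemma actE_invol {n m : ℕ} (ε : Fin n → Bool) :
    actE (sperm n m) (actE (sperm n m) ε) = ε := by
  rw [actE_mul, sperm_invol, actE_one]

section Box6
variable (hY : IsYoung n k lam) (hkn : k < n) (hr : IsShifts lam r)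
  (hi : 1 ≤ i) (hik : i ≤ k) (hj : j < lam i) (hm : m + i = k + j + 1)

include hY hr hi hik hj in
lemma hri1 : 1 ≤ r i (j+1) := r_pos hr hi (by omega) (by omega)

include hY hr hi hik hj in
lemma hcol2 (hi2 : 2 ≤ i) : r i (j+1) + 1 ≤ r (i-1) (j+1) := by
  have h1 : j + 1 ≤ lam (i-1) := le_trans (by omega) (lam_anti hY (i-1) i (by omega) (by omega))
  have h2 := r_col hr (a := i-1) (b := j+1) (by omega) (by omega) h1
  have h3 : i - 1 + 1 = i := by omega
  rw [h3] at h2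
  exact h2

include hY hr hi hik hj in
lemma hrow1 (hj1 : 1 ≤ j) : r i (j+1) + 1 ≤ r i j :=
  r_row hr hi hj1 (by omega)

-- (++) case
include hY hkn hr hi hik hj hm in
lemma Ia {ε : Fin n → Bool} (hs : Supp n k (muP lam i j) ε)
    (h1 : posVal ε m = true) (h2 : posVal ε (m+1) = true) :
    Wm n k r (muP lam i (j+1)) ε + 1 ≤ Wm n k r (muP lam i j) ε := by
  have hi2 : 2 ≤ i := by
    by_contra hcon
    have := F1_vac hY hkn hi hik hj hm (by omega) hs
    rw [h2] at this
    simp at this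
  have hC := deltaW hY hkn hi hik hj hm (r := r) ε
  simp [h1, h2, hi2] at hC
  have hterm : r i (j+1) ≤ Wt n k r (muP lam i (j+1)) ε := by
    have := Wt_ge_term hY hkn hi hik (r := r) (j+1) (by omega) ε (t0 := m)
      (km_lt_m hik hm) (by rw [A_mu'_i hik hm]; omega) h1
    have hexp : m + i - k = j + 1 := by omega
    rwa [hexp] at this
  have hc2 := hcol2 hY hr hi hik hj hi2
  have hr1 := hri1 hY hr hi hik hj
  unfold Wm
  omega

-- (--) case
include hY hkn hr hi hik hj hm in
lemma Ib (ε : Stt n k) (hs : Supp n k (muP lam i j) ε.1)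
    (h1 : posVal ε.1 m = false) (h2 : posVal ε.1 (m+1) = false) :
    Wm n k r (muP lam i (j+1)) ε.1 + 1 ≤ Wm n k r (muP lam i j) ε.1 := by
  have hj1 : 1 ≤ j := by
    by_contra hcon
    have := F2_plus hY hkn hi hik hj hm (by omega) ε hs
    rw [h1] at this
    exact Bool.false_ne_true this
  obtain ⟨t0, ht1, ht2, ht3⟩ := F3_exists hY hkn hi hik hj hm hj1 ε hs h1
  have hterm : 1 ≤ Wt n k r (muP lam i (j+1)) ε.1 := by
    have hW := Wt_ge_term hY hkn hi hik (r := r) (j+1) (by omega) ε.1 (t0 := t0)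
      ht1 (by rw [A_mu'_i hik hm]; omega) ht3
    have hrp : 1 ≤ r i (t0 + i - k) := r_pos hr hi (by omega) (by omega)
    omega
  have hC := deltaW hY hkn hi hik hj hm (r := r) ε.1
  simp [h1, h2, hj1] at hC
  have hr1 := hri1 hY hr hi hik hj
  have hrw := hrow1 hY hr hi hik hj hj1
  unfold Wm
  omega

-- (-+) case, diagonal
include hY hkn hr hi hik hj hm in
lemma Ic {ε : Fin n → Bool} (hs : Supp n k (muP lam i j) ε)
    (h1 : posVal ε m = false) (h2 : posVal ε (m+1) = true) :
    Wm n k r (muP lam i (j+1)) ε + 1 ≤ Wm n k r (muP lam i j) ε := by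
  have hi2 : 2 ≤ i := by
    by_contra hcon
    have := F1_vac hY hkn hi hik hj hm (by omega) hs
    rw [h2] at this
    simp at this
  have hC := deltaW hY hkn hi hik hj hm (r := r) ε
  simp [h1, h2, hi2] at hC
  have hc2 := hcol2 hY hr hi hik hj hi2
  have hr1 := hri1 hY hr hi hik hj
  have hX : (if 1 ≤ j then r i j - 1 else 0) ≤ r i j - 1 := by split <;> omega
  unfold Wm
  omega

-- (+-) case, swap
include hY hkn hr hi hik hj hm in
lemma Isw1 {ε : Fin n → Bool}
    (h1 : posVal ε m = true) (h2 : posVal ε (m+1) = false) :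
    Wm n k r (muP lam i (j+1)) (actE (sperm n m) ε) ≤ Wm n k r (muP lam i j) ε := by
  have hm1 := m_pos hi hik hm
  have hmn : m < n := by have := m1_le_n hY hkn hi hj hm; omega
  set ζ := actE (sperm n m) ε with hζ
  have hz1 : posVal ζ m = false := by
    rw [hζ, posVal_actE_sperm ε hm1 hmn m, if_pos rfl, h2]
  have hz2 : posVal ζ (m+1) = true := by
    rw [hζ, posVal_actE_sperm ε hm1 hmn (m+1), if_neg (by omega), if_pos rfl, h1]
  have hC := deltaW hY hkn hi hik hj hm (r := r) ζ
  simp [hz1, hz2] at hC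
  have hS := swapW hY hkn hi hik hj hm (r := r) ε h1 h2
  rw [← hζ] at hS
  unfold Wm
  omega

-- (-+) case, swap
include hY hkn hr hi hik hj hm in
lemma Isw2 (ε : Stt n k) (hs : Supp n k (muP lam i j) ε.1)
    (h1 : posVal ε.1 m = false) (h2 : posVal ε.1 (m+1) = true) :
    Wm n k r (muP lam i (j+1)) (actE (sperm n m) ε.1) ≤ Wm n k r (muP lam i j) ε.1 := by
  have hm1 := m_pos hi hik hm
  have hmn : m < n := by have := m1_le_n hY hkn hi hj hm; omega
  have hi2 : 2 ≤ i := by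
    by_contra hcon
    have := F1_vac hY hkn hi hik hj hm (by omega) hs
    rw [h2] at this
    simp at this
  have hj1 : 1 ≤ j := by
    by_contra hcon
    have := F2_plus hY hkn hi hik hj hm (by omega) ε hs
    rw [h1] at this
    exact Bool.false_ne_true this
  set ζ := actE (sperm n m) ε.1 with hζ
  have hz1 : posVal ζ m = true := by
    rw [hζ, posVal_actE_sperm ε.1 hm1 hmn m, if_pos rfl, h2]
  have hz2 : posVal ζ (m+1) = false := by
    rw [hζ, posVal_actE_sperm ε.1 hm1 hmn (m+1), if_neg (by omega), if_pos rfl, h1]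
  have hC := deltaW hY hkn hi hik hj hm (r := r) ζ
  simp [hz1, hz2] at hC
  have hS := swapW hY hkn hi hik hj hm (r := r) ζ hz1 hz2
  have hswap : actE (sperm n m) ζ = ε.1 := by rw [hζ, actE_invol]
  rw [hswap, if_pos hj1, if_pos hi2] at hS
  have hc2 := hcol2 hY hr hi hik hj hi2
  have hr1 := hri1 hY hr hi hik hj
  have hrw := hrow1 hY hr hi hik hj hj1
  unfold Wm
  omega

-- uniform bound
include hY hkn hr hi hik hj hm in
lemma If_bound (ε : Fin n → Bool) :
    Wm n k r (muP lam i (j+1)) ε ≤ Wm n k r (muP lam i j) ε + (2 * r i (j+1) - 1) := by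
  have hC := deltaW hY hkn hi hik hj hm (r := r) ε
  have hr1 := hri1 hY hr hi hik hj
  have hA : (if posVal ε (m+1) = false then r i (j+1) - 1 else 0) ≤ r i (j+1) - 1 := by
    split <;> omega
  have hB : (if posVal ε m = true then r i (j+1) else 0) ≤ r i (j+1) := by
    split <;> omega
  unfold Wm
  omega

-- weight of the old leading term
include hY hkn hr hi hik hj hm in
lemma Ig_eta :
    Wm n k r (muP lam i (j+1)) (etaSeq n k (muP lam i j)) ≤ 2 * r i (j+1) - 1 := by
  have hC := deltaW hY hkn hi hik hj hm (r := r) (etaSeq n k (muP lam i j))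
  rw [eta_m_true hY hkn hi hik hj hm, eta_m1_false hY hkn hi hik hj hm] at hC
  simp at hC
  rw [Wt_eta_zero hY hkn hi hik (r := r) j (by omega)] at hC
  have hr1 := hri1 hY hr hi hik hj
  unfold Wm
  omega

end Box6
end Comb6
section Heck
variable {n k : ℕ}

lemma bv_eq_basisFun (ε : Stt n k) : bv ε = Pi.basisFun F (Stt n k) ε := by
  funext ε'
  simp [bv, Pi.basisFun_apply, Function.update, Pi.single]

lemma bv_apply (ε ε' : Stt n k) : bv ε ε' = if ε' = ε then 1 else 0 := by
  simp [bv, Pi.single_apply]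

lemma M_eq_sum (x : M n k) : x = ∑ ε : Stt n k, x ε • bv ε := by
  funext ε'
  rw [Finset.sum_apply]
  simp only [Pi.smul_apply, bv_apply, smul_eq_mul, mul_ite, mul_one, mul_zero]
  rw [Finset.sum_ite_eq Finset.univ ε' (fun ε => x ε)]
  simp

lemma Thk_sum (m : ℕ) (x : M n k) :
    Thk n k m x = ∑ ε : Stt n k, x ε • Thk n k m (bv ε) := by
  conv_lhs => rw [M_eq_sum x]
  rw [map_sum]
  simp only [map_smul]

lemma Thk_bv {m : ℕ} (hm1 : 1 ≤ m) (hmn : m < n) (ζ : Stt n k) :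
    Thk n k m (bv ζ)
      = if posVal ζ.1 m = true ∧ posVal ζ.1 (m+1) = false
          then bv (actS (sperm n m) ζ)
        else if posVal ζ.1 m = posVal ζ.1 (m+1) then (-v⁻¹) • bv ζ
        else bv (actS (sperm n m) ζ) + (v - v⁻¹) • bv ζ := by
  unfold Thk
  rw [bv_eq_basisFun, Module.Basis.constr_basis, dif_pos ⟨hm1, hmn⟩]
  have ha : ζ.1 ⟨m - 1, by omega⟩ = posVal ζ.1 m := (posVal_pos ζ.1 hm1 (by omega)).symm
  have hb : ζ.1 ⟨m, hmn⟩ = posVal ζ.1 (m+1) := by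
    rw [posVal_pos ζ.1 (by omega) (by omega)]
    congr 1
  simp only [ha, hb]
  rcases Bool.eq_false_or_eq_true (posVal ζ.1 m) with h1 | h1 <;>
    rcases Bool.eq_false_or_eq_true (posVal ζ.1 (m+1)) with h2 | h2 <;>
      simp [h1, h2, bv]

lemma sum_mem_Ozero {s : Finset (Stt n k)} {f : Stt n k → F} {d : ℕ}
    (h : ∀ ζ ∈ s, f ζ ∈ Ozero d) : (∑ ζ ∈ s, f ζ) ∈ Ozero d := by
  classical
  induction s using Finset.induction_on with
  | empty => simpa using zero_mem_Ozero d
  | insert _ _ hnotmem ih =>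
    rw [Finset.sum_insert hnotmem]
    exact add_mem_Ozero (h _ (Finset.mem_insert_self _ _))
      (ih fun ζ hζ => h ζ (Finset.mem_insert_of_mem hζ))

/-- Lattice membership for the inductive invariant. -/
def InLat (n k : ℕ) (r : ℕ → ℕ → ℕ) (mu : ℕ → ℕ) (z : M n k) : Prop :=
  ∀ ε : Stt n k, z ε ∈ Ozero (Wm n k r mu ε.1) ∧ (¬ Supp n k mu ε.1 → z ε = 0)

end Heck
section Step
variable {n k : ℕ} {lam : ℕ → ℕ} {r : ℕ → ℕ → ℕ} {i j m : ℕ}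

lemma Supp_eta_refl {mu : ℕ → ℕ} : Supp n k mu (etaSeq n k mu) := fun _ => le_rfl

variable (hY : IsYoung n k lam) (hkn : k < n) (hr : IsShifts lam r)
  (hi : 1 ≤ i) (hik : i ≤ k) (hj : j < lam i) (hm : m + i = k + j + 1)

include hY hkn hr hi hik hj hm in
lemma step_lemma (η : Stt n k) (hη : η.1 = etaSeq n k (muP lam i j))
    (z : M n k) (hz : InLat n k r (muP lam i j) z) :
    ∃ z' : M n k,
      (Thk n k m - (v ^ (r i (j+1)) / qint (r i (j+1))) • (1 : Module.End F (M n k)))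
          (bv η + z)
        = bv (actS (sperm n m) η) + z'
      ∧ InLat n k r (muP lam i (j+1)) z'
      ∧ (actS (sperm n m) η).1 = etaSeq n k (muP lam i (j+1)) := by
  have hm1 : 1 ≤ m := m_pos hi hik hm
  have hmn : m < n := by have := m1_le_n hY hkn hi hj hm; omega
  have hR1 : 1 ≤ r i (j+1) := hri1 hY hr hi hik hj
  have hηm : posVal η.1 m = true := by rw [hη]; exact eta_m_true hY hkn hi hik hj hm
  have hηm1 : posVal η.1 (m+1) = false := by rw [hη]; exact eta_m1_false hY hkn hi hik hj hm
  have hη' : (actS (sperm n m) η).1 = etaSeq n k (muP lam i (j+1)) := by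
    show actE (sperm n m) η.1 = _
    rw [hη]
    exact eta_swap hY hkn hi hik hj hm
  set c : F := v ^ (r i (j+1)) / qint (r i (j+1)) with hcdef
  have hcO : c ∈ Ozero (2 * r i (j+1) - 1) := qint_coef_mem_Ozero hR1
  refine ⟨Thk n k m z - c • z - c • bv η, ?_, ?_, hη'⟩
  · have hTη : Thk n k m (bv η) = bv (actS (sperm n m) η) := by
      rw [Thk_bv hm1 hmn η, if_pos ⟨hηm, hηm1⟩]
    rw [LinearMap.sub_apply, map_add, hTη, LinearMap.smul_apply, Module.End.one_apply,
      smul_add]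
    abel
  · intro ε
    have hval : (Thk n k m z - c • z - c • bv η) ε
        = (∑ ζ : Stt n k, z ζ * (Thk n k m (bv ζ)) ε) + (-(c * z ε)) + (-(c * bv η ε)) := by
      simp only [Pi.sub_apply, Pi.smul_apply, smul_eq_mul]
      rw [Thk_sum m z, Finset.sum_apply]
      simp only [Pi.smul_apply, smul_eq_mul]
      ring
    constructor
    · rw [hval]
      refine add_mem_Ozero (add_mem_Ozero (sum_mem_Ozero ?_) ?_) ?_
      · intro ζ _
        by_cases hz0 : z ζ = 0
        · rw [hz0, zero_mul]; exact zero_mem_Ozero _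
        have hsupp : Supp n k (muP lam i j) ζ.1 := by
          by_contra hcon
          exact hz0 ((hz ζ).2 hcon)
        have hmem := (hz ζ).1
        rw [Thk_bv hm1 hmn ζ]
        rcases Bool.eq_false_or_eq_true (posVal ζ.1 m) with h1 | h1 <;>
          rcases Bool.eq_false_or_eq_true (posVal ζ.1 (m+1)) with h2 | h2
        · -- (+,+) diagonal
          rw [if_neg (by simp [h2]), if_pos (by rw [h1, h2])]
          simp only [Pi.smul_apply, bv_apply, smul_eq_mul]
          by_cases he : ε = ζ
          · rw [if_pos he]
            have hle := Ia hY hkn hr hi hik hj hm hsupp h1 h2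
            have hmem2 : z ζ ∈ Ozero (Wm n k r (muP lam i (j+1)) ζ.1 + 1) :=
              Ozero_mono (by omega) hmem
            have h3 := neg_mem_Ozero (inv_v_mul_mem_Ozero hmem2)
            have heq : z ζ * (-v⁻¹ * 1) = -(v⁻¹ * z ζ) := by ring
            rw [heq, he]
            exact h3
          · rw [if_neg he, mul_zero, mul_zero]
            exact zero_mem_Ozero _
        · -- (+,-) swap
          rw [if_pos ⟨h1, h2⟩]
          simp only [bv_apply]
          by_cases he : ε = actS (sperm n m) ζ
          · rw [if_pos he, mul_one]
            have hle := Isw1 hY hkn hr hi hik hj hm h1 h2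
            have heps : ε.1 = actE (sperm n m) ζ.1 := by rw [he]; rfl
            rw [heps]
            exact Ozero_mono hle hmem
          · rw [if_neg he, mul_zero]
            exact zero_mem_Ozero _
        · -- (-,+)
          rw [if_neg (by simp [h1]), if_neg (by rw [h1, h2]; simp)]
          simp only [Pi.add_apply, Pi.smul_apply, bv_apply, smul_eq_mul, mul_add]
          refine add_mem_Ozero ?_ ?_
          · by_cases he : ε = actS (sperm n m) ζ
            · rw [if_pos he, mul_one]
              have hle := Isw2 hY hkn hr hi hik hj hm ζ hsupp h1 h2
              have heps : ε.1 = actE (sperm n m) ζ.1 := by rw [he]; rfl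
              rw [heps]
              exact Ozero_mono hle hmem
            · rw [if_neg he, mul_zero]
              exact zero_mem_Ozero _
          · by_cases he : ε = ζ
            · rw [if_pos he, mul_one]
              have hle := Ic hY hkn hr hi hik hj hm hsupp h1 h2
              have hmem2 : z ζ ∈ Ozero (Wm n k r (muP lam i (j+1)) ζ.1 + 1) :=
                Ozero_mono (by omega) hmem
              have h3 := vsub_mul_mem_Ozero hmem2
              have heq : z ζ * (v - v⁻¹) = (v - v⁻¹) * z ζ := by ring
              rw [heq, he]
              exact h3
            · rw [if_neg he, mul_zero, mul_zero]
              exact zero_mem_Ozero _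
        · -- (-,-) diagonal
          rw [if_neg (by simp [h1]), if_pos (by rw [h1, h2])]
          simp only [Pi.smul_apply, bv_apply, smul_eq_mul]
          by_cases he : ε = ζ
          · rw [if_pos he]
            have hle := Ib hY hkn hr hi hik hj hm ζ hsupp h1 h2
            have hmem2 : z ζ ∈ Ozero (Wm n k r (muP lam i (j+1)) ζ.1 + 1) :=
              Ozero_mono (by omega) hmem
            have h3 := neg_mem_Ozero (inv_v_mul_mem_Ozero hmem2)
            have heq : z ζ * (-v⁻¹ * 1) = -(v⁻¹ * z ζ) := by ring
            rw [heq, he]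
            exact h3
          · rw [if_neg he, mul_zero, mul_zero]
            exact zero_mem_Ozero _
      · apply neg_mem_Ozero
        have h1 := (hz ε).1
        have h2 := mul_mem_Ozero hcO h1
        refine Ozero_mono ?_ h2
        have := If_bound hY hkn hr hi hik hj hm ε.1
        omega
      · apply neg_mem_Ozero
        rw [bv_apply]
        by_cases he : ε = η
        · rw [if_pos he, mul_one]
          refine Ozero_mono ?_ hcO
          have := Ig_eta hY hkn hr hi hik hj hm
          rw [he, hη]
          exact this
        · rw [if_neg he, mul_zero]
          exact zero_mem_Ozero _
    · intro hnsupp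
      have hnsupp0 : ¬ Supp n k (muP lam i j) ε.1 := fun h =>
        hnsupp (Supp_diag hY hkn hi hik hj hm h)
      rw [hval]
      have hz1 : z ε = 0 := (hz ε).2 hnsupp0
      have hη0 : bv η ε = 0 := by
        rw [bv_apply, if_neg]
        intro he
        apply hnsupp
        rw [he, hη]
        exact Supp_diag hY hkn hi hik hj hm Supp_eta_refl
      rw [hz1, hη0]
      simp only [mul_zero, neg_zero, add_zero]
      refine Finset.sum_eq_zero ?_
      intro ζ _
      by_cases hz0 : z ζ = 0
      · rw [hz0, zero_mul]
      have hsupp : Supp n k (muP lam i j) ζ.1 := by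
        by_contra hcon
        exact hz0 ((hz ζ).2 hcon)
      have hmem := (hz ζ).1
      rw [Thk_bv hm1 hmn ζ]
      have hdiag : bv ζ ε = 0 := by
        rw [bv_apply, if_neg]
        intro he
        exact hnsupp (he ▸ Supp_diag hY hkn hi hik hj hm hsupp)
      rcases Bool.eq_false_or_eq_true (posVal ζ.1 m) with h1 | h1 <;>
        rcases Bool.eq_false_or_eq_true (posVal ζ.1 (m+1)) with h2 | h2
      · rw [if_neg (by simp [h2]), if_pos (by rw [h1, h2])]
        simp only [Pi.smul_apply, smul_eq_mul, hdiag, mul_zero]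
      · rw [if_pos ⟨h1, h2⟩]
        have hswap0 : bv (actS (sperm n m) ζ) ε = 0 := by
          rw [bv_apply, if_neg]
          intro he
          apply hnsupp
          have heps : ε.1 = actE (sperm n m) ζ.1 := by rw [he]; rfl
          rw [heps]
          exact Supp_swap_pm hY hkn hi hik hj hm hsupp h1 h2
        rw [hswap0, mul_zero]
      · rw [if_neg (by simp [h1]), if_neg (by rw [h1, h2]; simp)]
        have hswap0 : bv (actS (sperm n m) ζ) ε = 0 := by
          rw [bv_apply, if_neg]
          intro he
          apply hnsupp
          have heps : ε.1 = actE (sperm n m) ζ.1 := by rw [he]; rfl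
          rw [heps]
          exact Supp_swap_mp hY hkn hi hik hj hm hsupp h1 h2
        simp only [Pi.add_apply, Pi.smul_apply, smul_eq_mul, hdiag, hswap0, mul_zero,
          add_zero]
      · rw [if_neg (by simp [h1]), if_pos (by rw [h1, h2])]
        simp only [Pi.smul_apply, smul_eq_mul, hdiag, mul_zero]

end Step
section Lists
variable {α : Type*} [Monoid α]

def pRow (f : ℕ × ℕ → α) (i j : ℕ) : α :=
  ((List.range j).reverse.map fun j' => f (i, j'+1)).prod

def pAll (lam : ℕ → ℕ) (f : ℕ × ℕ → α) : ℕ → α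
  | 0 => 1
  | (i+1) => pRow f (i+1) (lam (i+1)) * pAll lam f i

lemma pRow_zero (f : ℕ × ℕ → α) (i : ℕ) : pRow f i 0 = 1 := rfl

lemma pRow_succ (f : ℕ × ℕ → α) (i j : ℕ) : pRow f i (j+1) = f (i, j+1) * pRow f i j := by
  unfold pRow
  rw [List.range_succ, List.reverse_append]
  simp

lemma boxProd_eq (lam : ℕ → ℕ) (f : ℕ × ℕ → α) (k : ℕ) :
    ((boxList k lam).map f).prod = pAll lam f k := by
  induction k with
  | zero => simp [boxList, pAll]
  | succ K ih =>
    unfold boxList pAll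
    rw [List.range_succ, List.reverse_append]
    simp only [List.reverse_cons, List.reverse_nil, List.nil_append, List.singleton_append,
      List.map_cons, List.flatten_cons, List.map_append, List.prod_append]
    rw [List.map_map, ← ih]
    rfl

end Lists

section Final
variable {n k : ℕ} {lam : ℕ → ℕ} {r : ℕ → ℕ → ℕ}

lemma eta_one (hk : 0 < k) (hkn : k < n) : etaSeq n k (muP lam 1 0) = oneSeq n k := by
  funext u
  unfold etaSeq oneSeq
  rw [decide_eq_decide]
  have h0 : ∀ a, 1 ≤ a → muP lam 1 0 a = 0 := by
    intro a ha
    rcases eq_or_ne a 1 with rfl | h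
    · exact muP_eqi
    · exact muP_gt (by omega)
  constructor
  · rintro ⟨a, h1, h2, h3⟩
    rw [Aof_eq h2, h0 a h1] at h3
    omega
  · intro h
    refine ⟨k - (u : ℕ), by omega, by omega, ?_⟩
    rw [Aof_eq (by omega), h0 _ (by omega)]
    omega

lemma InLat_zero (mu : ℕ → ℕ) : InLat n k r mu (0 : M n k) :=
  fun _ => ⟨zero_mem_Ozero _, fun _ => rfl⟩

variable (hY : IsYoung n k lam) (hk : 0 < k) (hkn : k < n) (hr : IsShifts lam r)

/-- abbreviations for the two box-functions -/
noncomputable def fX (n k : ℕ) (r : ℕ → ℕ → ℕ) : ℕ × ℕ → Module.End F (M n k) :=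
  fun b => Thk n k (k + b.2 - b.1) - (v ^ r b.1 b.2 / qint (r b.1 b.2)) • 1

def fP (n k : ℕ) : ℕ × ℕ → Equiv.Perm (Fin n) := fun b => sperm n (k + b.2 - b.1)

include hY hk hkn hr in
lemma row_ind (i : ℕ) (hi1 : 1 ≤ i) (hik : i ≤ k)
    (base : ∃ (η : Stt n k) (z : M n k),
      (pAll lam (fX n k r) (i-1)) (bv (oneS n k hkn.le)) = bv η + z
      ∧ η.1 = etaSeq n k (muP lam i 0)
      ∧ InLat n k r (muP lam i 0) z
      ∧ actE (pAll lam (fP n k) (i-1)) (oneS n k hkn.le).1 = etaSeq n k (muP lam i 0)) :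
    ∀ j, j ≤ lam i → ∃ (η : Stt n k) (z : M n k),
      (pRow (fX n k r) i j * pAll lam (fX n k r) (i-1)) (bv (oneS n k hkn.le)) = bv η + z
      ∧ η.1 = etaSeq n k (muP lam i j)
      ∧ InLat n k r (muP lam i j) z
      ∧ actE (pRow (fP n k) i j * pAll lam (fP n k) (i-1)) (oneS n k hkn.le).1
          = etaSeq n k (muP lam i j) := by
  intro j
  induction j with
  | zero =>
    intro _
    obtain ⟨η, z, h1, h2, h3, h4⟩ := base
    exact ⟨η, z, by rwa [pRow_zero, one_mul], h2, h3, by rwa [pRow_zero, one_mul]⟩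
  | succ j ih =>
    intro hj
    obtain ⟨η, z, h1, h2, h3, h4⟩ := ih (by omega)
    have hm : (k + j - i) + i = k + j + 1 - 1 := by omega
    set m := k + j + 1 - i with hmdef
    have hm' : m + i = k + j + 1 := by omega
    have hletter : k + (j + 1) - i = m := by omega
    have hstep := step_lemma hY hkn hr hi1 hik (by omega : j < lam i) hm' η h2 z h3
    obtain ⟨z', he1, he2, he3⟩ := hstep
    refine ⟨actS (sperm n m) η, z', ?_, he3, he2, ?_⟩
    · rw [pRow_succ, mul_assoc]
      rw [Module.End.mul_apply]
      have hfx : fX n k r (i, j+1)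
          = Thk n k m - (v ^ r i (j+1) / qint (r i (j+1))) • 1 := by
        unfold fX
        rw [hletter]
      rw [hfx, ← he1, h1]
    · rw [pRow_succ, mul_assoc, ← actE_mul, h4]
      have hfp : fP n k (i, j+1) = sperm n m := by
        unfold fP
        rw [hletter]
      rw [hfp]
      exact eta_swap hY hkn hi1 hik (by omega) hm'
end Final

section Final2
variable {n k : ℕ} {lam : ℕ → ℕ} {r : ℕ → ℕ → ℕ}
variable (hY : IsYoung n k lam) (hk : 0 < k) (hkn : k < n) (hr : IsShifts lam r)

include hY hk hkn hr in
lemma all_ind : ∀ i, i ≤ k → ∃ (η : Stt n k) (z : M n k),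
    (pAll lam (fX n k r) i) (bv (oneS n k hkn.le)) = bv η + z
    ∧ η.1 = etaSeq n k (muP lam (i+1) 0)
    ∧ InLat n k r (muP lam (i+1) 0) z
    ∧ actE (pAll lam (fP n k) i) (oneS n k hkn.le).1 = etaSeq n k (muP lam (i+1) 0) := by
  intro i
  induction i with
  | zero =>
    intro _
    refine ⟨oneS n k hkn.le, 0, ?_, (eta_one hk hkn).symm, InLat_zero _, ?_⟩
    · show (1 : Module.End F (M n k)) _ = _
      rw [Module.End.one_apply, add_zero]
    · show actE 1 _ = _
      rw [actE_one]
      exact (eta_one hk hkn).symm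
  | succ I ih =>
    intro hik
    obtain ⟨η, z, h1, h2, h3, h4⟩ := ih (by omega)
    have hrow := row_ind hY hk hkn hr (I+1) (by omega) hik
      ⟨η, z, h1, h2, h3, h4⟩ (lam (I+1)) le_rfl
    obtain ⟨η', z', g1, g2, g3, g4⟩ := hrow
    have hsh : muP lam (I+1) (lam (I+1)) = muP lam (I+1+1) 0 := muP_row_end rfl
    rw [hsh] at g2 g3 g4
    exact ⟨η', z', g1, g2, g3, g4⟩

end Final2

/-- X_λ·𝟏 − w_λ·𝟏 ∈ Σ_ε O(v)·ε: every coefficient of X_λ·𝟏 − w_λ·𝟏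
is regular at v = 0 and vanishes at v = 0. -/
theorem kl_regular_at_zero (n k : ℕ) (hk : 0 < k) (hkn : k < n)
    (lam : ℕ → ℕ) (hY : IsYoung n k lam) (r : ℕ → ℕ → ℕ) (hr : IsShifts lam r) :
    ∀ ε : Stt n k,
      (Xop n k lam r (bv (oneS n k hkn.le)) - bv (wSt n k hkn.le lam)) ε ∈ Ozero 1 := by
  intro ε
  obtain ⟨η, z, h1, h2, h3, h4⟩ := all_ind hY hk hkn hr k le_rfl
  have hX : Xop n k lam r (bv (oneS n k hkn.le)) = bv η + z := by
    have hXe : Xop n k lam r = pAll lam (fX n k r) k := boxProd_eq lam (fX n k r) k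
    rw [hXe]
    exact h1
  have hw : wSt n k hkn.le lam = η := by
    apply Subtype.ext
    show actE (wperm n k lam) (oneS n k hkn.le).1 = η.1
    rw [h2, ← h4]
    unfold wperm wword
    rw [List.map_map]
    rw [show (sperm n ∘ fun b : ℕ × ℕ => k + b.2 - b.1) = fP n k from rfl]
    rw [boxProd_eq lam (fP n k) k]
  rw [hX, hw]
  have hz : (bv η + z - bv η) ε = z ε := by
    simp
  rw [hz]
  exact Ozero_mono (le_max_right _ 1) ((h3 ε).1)

end
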